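/- arXiv:0912.4486 — 5 statements merged into one kernel-verified Lean document; each statement's English description precedes it below -/
import Mathlib

section
/- Let H be a Hilbert space, P an orthogonal projection on H with complement P^⊥ = I − P, and V a bounded self-adjoint operator on H. Then for every ε > 0, in the sense of quadratic forms, P(V − ε|V|)P + P^⊥(V − ε^{-1}|V|)P^⊥ ≤ V ≤ P(V + ε|V|)P + P^⊥(V + ε^{-1}|V|)P^⊥. -/
set_option maxHeartbeats 1000000
set_option synthInstance.maxHeartbeats 200000

open scoped InnerProductSpace ComplexConjugate

section Aux

variable {H : Type*} [NormedAddCommGroup H] [InnerProductSpace ℂ H] [CompleteSpace H]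

private lemma re_inner_self' (x : H) : (⟪x, x⟫_ℂ).re = ‖x‖ ^ 2 := by
  have := inner_self_eq_norm_sq (𝕜 := ℂ) x; simpa using this

/-- Cauchy–Schwarz for a positive operator. -/
private lemma pos_cs {T : H →L[ℂ] H} (hT : 0 ≤ T) (x y : H) :
    |(⟪T x, y⟫_ℂ).re| ≤ Real.sqrt ((⟪T x, x⟫_ℂ).re) * Real.sqrt ((⟪T y, y⟫_ℂ).re) := by
  set S := CFC.sqrt T with hSdef
  have hS : 0 ≤ S := CFC.sqrt_nonneg T
  have hSS : S * S = T := CFC.sqrt_mul_sqrt_self T hT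
  have hSsa : IsSelfAdjoint S := IsSelfAdjoint.of_nonneg hS
  have key : ∀ u v : H, ⟪T u, v⟫_ℂ = ⟪S u, S v⟫_ℂ := by
    intro u v
    rw [← hSS, ContinuousLinearMap.mul_apply,
      ← ContinuousLinearMap.adjoint_inner_right _ (S u) v, hSsa.adjoint_eq]
  have hn : ∀ u : H, (⟪T u, u⟫_ℂ).re = ‖S u‖ ^ 2 := fun u => by
    rw [key]; exact re_inner_self' _
  calc |(⟪T x, y⟫_ℂ).re| ≤ ‖⟪T x, y⟫_ℂ‖ := Complex.abs_re_le_norm _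
    _ = ‖⟪S x, S y⟫_ℂ‖ := by rw [key]
    _ ≤ ‖S x‖ * ‖S y‖ := norm_inner_le_norm _ _
    _ = Real.sqrt ((⟪T x, x⟫_ℂ).re) * Real.sqrt ((⟪T y, y⟫_ℂ).re) := by
        rw [hn x, hn y, Real.sqrt_sq (norm_nonneg _), Real.sqrt_sq (norm_nonneg _)]

/-- `A = |V|` dominates `±V`. -/
private lemma abs_dominates {V A : H →L[ℂ] H} (hV : IsSelfAdjoint V) (hA : IsSelfAdjoint A)
    (hApos : ∀ ψ : H, 0 ≤ (⟪A ψ, ψ⟫_ℂ).re) (hAabs : A ∘L A = V ∘L V) :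
    0 ≤ A + V ∧ 0 ≤ A - V := by
  have hA0 : 0 ≤ A := (ContinuousLinearMap.nonneg_iff_isPositive A).2
    ⟨ContinuousLinearMap.isSelfAdjoint_iff_isSymmetric.mp hA, fun x => by simpa [ContinuousLinearMap.reApplyInnerSelf] using hApos x⟩
  set W := cfc (fun x : ℝ => |x|) V with hWdef
  have hW0 : 0 ≤ W := cfc_nonneg (fun x _ => abs_nonneg x)
  have hWW : W * W = V * V := by
    rw [hWdef, ← cfc_mul _ _ V (by fun_prop) (by fun_prop)]
    simp only [abs_mul_abs_self]
    conv_rhs => rw [← cfc_id' ℝ V]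
    rw [← cfc_mul _ _ V (by fun_prop) (by fun_prop)]
  have h1 : CFC.sqrt (V * V) = A := CFC.sqrt_unique hAabs hA0
  have h2 : CFC.sqrt (V * V) = W := CFC.sqrt_unique hWW hW0
  have hAW : A = W := by rw [← h1, h2]
  constructor
  · have h3 : 0 ≤ cfc (fun x : ℝ => |x| + x) V :=
      cfc_nonneg (fun x _ => by linarith [neg_abs_le x])
    rwa [cfc_add (a := V) (R := ℝ) _ _ (by fun_prop) (by fun_prop), cfc_id' ℝ V,
      ← hWdef, ← hAW] at h3
  · have h3 : 0 ≤ cfc (fun x : ℝ => |x| - x) V :=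
      cfc_nonneg (fun x _ => by linarith [le_abs_self x])
    rwa [cfc_sub _ _ V (by fun_prop) (by fun_prop), cfc_id' ℝ V, ← hWdef, ← hAW] at h3

private lemma amgm' {ε a b : ℝ} (hε : 0 < ε) (ha : 0 ≤ a) (hb : 0 ≤ b) :
    2 * (Real.sqrt a * Real.sqrt b) ≤ ε * a + ε⁻¹ * b := by
  have key : Real.sqrt a * Real.sqrt b = Real.sqrt (ε * a) * Real.sqrt (ε⁻¹ * b) := by
    rw [← Real.sqrt_mul ha, ← Real.sqrt_mul (by positivity)]
    congr 1
    field_simp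
  rw [key]
  nlinarith [sq_nonneg (Real.sqrt (ε * a) - Real.sqrt (ε⁻¹ * b)),
    Real.sq_sqrt (mul_nonneg hε.le ha), Real.sq_sqrt (mul_nonneg (inv_nonneg.2 hε.le) hb)]

end Aux

/-- Lemma 4.2 of the paper: if `P` is an orthogonal projection with complement
`Q = 1 - P`, `V` is bounded self-adjoint, and `A` is the operator absolute value `|V|`
(the unique positive self-adjoint operator with `A² = V²`), then in the quadratic form
sense `P(V - ε A)P + Q(V - ε⁻¹ A)Q ≤ V ≤ P(V + ε A)P + Q(V + ε⁻¹ A)Q`. -/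
theorem stmt5 {H : Type*} [NormedAddCommGroup H] [InnerProductSpace ℂ H] [CompleteSpace H]
    (V A P : H →L[ℂ] H)
    (hV : IsSelfAdjoint V)
    (hA : IsSelfAdjoint A) (hApos : ∀ ψ : H, 0 ≤ (⟪A ψ, ψ⟫_ℂ).re)
    (hAabs : A ∘L A = V ∘L V)
    (hP : IsSelfAdjoint P) (hProj : P ∘L P = P)
    (ε : ℝ) (hε : 0 < ε) :
    let Q := ContinuousLinearMap.id ℂ H - P
    (∀ ψ : H,
        (⟪(P ∘L ((V - (ε : ℂ) • A) ∘L P) + Q ∘L ((V - ((ε : ℂ)⁻¹) • A) ∘L Q)) ψ, ψ⟫_ℂ).re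
          ≤ (⟪V ψ, ψ⟫_ℂ).re) ∧
    (∀ ψ : H,
        (⟪V ψ, ψ⟫_ℂ).re
          ≤ (⟪(P ∘L ((V + (ε : ℂ) • A) ∘L P) + Q ∘L ((V + ((ε : ℂ)⁻¹) • A) ∘L Q)) ψ, ψ⟫_ℂ).re) := by
  intro Q
  have hQ : IsSelfAdjoint Q := by
    have h1 : IsSelfAdjoint (ContinuousLinearMap.id ℂ H) := by
      rw [isSelfAdjoint_iff]; exact ContinuousLinearMap.adjoint_id
    exact h1.sub hP
  have hPsymm := ContinuousLinearMap.isSelfAdjoint_iff_isSymmetric.mp hP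
  have hQsymm := ContinuousLinearMap.isSelfAdjoint_iff_isSymmetric.mp hQ
  have hVsymm := ContinuousLinearMap.isSelfAdjoint_iff_isSymmetric.mp hV
  obtain ⟨hBpos, hCpos⟩ := abs_dominates hV hA hApos hAabs
  -- cross-term estimate
  have cross : ∀ x y : H, |2 * (⟪V x, y⟫_ℂ).re|
      ≤ ε * (⟪A x, x⟫_ℂ).re + ε⁻¹ * (⟪A y, y⟫_ℂ).re := by
    intro x y
    have hb := pos_cs hBpos x y
    have hc := pos_cs hCpos x y
    have hbxx := ((ContinuousLinearMap.nonneg_iff_isPositive _).1 hBpos).re_inner_nonneg_left x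
    have hbyy := ((ContinuousLinearMap.nonneg_iff_isPositive _).1 hBpos).re_inner_nonneg_left y
    have hcxx := ((ContinuousLinearMap.nonneg_iff_isPositive _).1 hCpos).re_inner_nonneg_left x
    have hcyy := ((ContinuousLinearMap.nonneg_iff_isPositive _).1 hCpos).re_inner_nonneg_left y
    simp only [ContinuousLinearMap.reApplyInnerSelf_apply, RCLike.re_to_complex]
      at hbxx hbyy hcxx hcyy
    have hB1 := amgm' hε hbxx hbyy
    have hC1 := amgm' hε hcxx hcyy
    have hBexp : ∀ u v : H, (⟪(A + V) u, v⟫_ℂ).re = (⟪A u, v⟫_ℂ).re + (⟪V u, v⟫_ℂ).re := by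
      intro u v; simp [inner_add_left]
    have hCexp : ∀ u v : H, (⟪(A - V) u, v⟫_ℂ).re = (⟪A u, v⟫_ℂ).re - (⟪V u, v⟫_ℂ).re := by
      intro u v; simp [inner_sub_left]
    simp only [hBexp] at hb hB1
    simp only [hCexp] at hc hC1
    rw [abs_le] at hb hc ⊢
    constructor <;> nlinarith [hb.1, hb.2, hc.1, hc.2, Real.sqrt_nonneg ((⟪A x, x⟫_ℂ).re + (⟪V x, x⟫_ℂ).re), Real.sqrt_nonneg ((⟪A x, x⟫_ℂ).re - (⟪V x, x⟫_ℂ).re), Real.sqrt_nonneg ((⟪A y, y⟫_ℂ).re + (⟪V y, y⟫_ℂ).re), Real.sqrt_nonneg ((⟪A y, y⟫_ℂ).re - (⟪V y, y⟫_ℂ).re)]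
  -- reduction of the quadratic forms
  have hPform : ∀ (X : H →L[ℂ] H) (ψ : H),
      ⟪(P ∘L (X ∘L P)) ψ, ψ⟫_ℂ = ⟪X (P ψ), P ψ⟫_ℂ := by
    intro X ψ
    simp only [ContinuousLinearMap.comp_apply]
    exact hPsymm (X (P ψ)) ψ
  have hQform : ∀ (X : H →L[ℂ] H) (ψ : H),
      ⟪(Q ∘L (X ∘L Q)) ψ, ψ⟫_ℂ = ⟪X (Q ψ), Q ψ⟫_ℂ := by
    intro X ψ
    simp only [ContinuousLinearMap.comp_apply]
    exact hQsymm (X (Q ψ)) ψ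
  have hsmul : ∀ (c : ℝ) (u v : H), (⟪((c : ℂ) • A) u, v⟫_ℂ).re = c * (⟪A u, v⟫_ℂ).re := by
    intro c u v
    rw [ContinuousLinearMap.smul_apply, inner_smul_left, Complex.conj_ofReal,
      Complex.re_ofReal_mul]
  have hdecomp : ∀ ψ : H, ψ = P ψ + Q ψ := by
    intro ψ; simp [Q]
  have expV : ∀ ψ : H, (⟪V ψ, ψ⟫_ℂ).re
      = (⟪V (P ψ), P ψ⟫_ℂ).re + (⟪V (Q ψ), Q ψ⟫_ℂ).re + 2 * (⟪V (P ψ), Q ψ⟫_ℂ).re := by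
    intro ψ
    have hsym : ⟪V (Q ψ), P ψ⟫_ℂ = conj ⟪V (P ψ), Q ψ⟫_ℂ := by
      have h1 : ⟪V (Q ψ), P ψ⟫_ℂ = ⟪Q ψ, V (P ψ)⟫_ℂ := hVsymm _ _
      rw [h1]
      exact (inner_conj_symm _ _).symm
    conv_lhs => rw [hdecomp ψ]
    rw [map_add]
    simp only [inner_add_left, inner_add_right, Complex.add_re, hsym, Complex.conj_re]
    ring
  have hinv : ((ε : ℂ))⁻¹ = ((ε⁻¹ : ℝ) : ℂ) := by push_cast; ring
  constructor <;> intro ψ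
  · have h := cross (P ψ) (Q ψ)
    rw [abs_le] at h
    rw [ContinuousLinearMap.add_apply, inner_add_left, Complex.add_re, hPform, hQform, expV]
    simp only [ContinuousLinearMap.sub_apply, inner_sub_left, Complex.sub_re, hinv, hsmul]
    linarith [h.1]
  · have h := cross (P ψ) (Q ψ)
    rw [abs_le] at h
    rw [ContinuousLinearMap.add_apply, inner_add_left, Complex.add_re, hPform, hQform, expV]
    simp only [ContinuousLinearMap.add_apply, inner_add_left, Complex.add_re, hinv, hsmul]
    linarith [h.2]
end

section
/- Let Ω₊, Ω₋ ⊂ ℂ be compact sets of positive measure and suppose there exists a polynomial p ≢ 0 of degree m with sup_{Ω₋}|p(z)| ≤ γ · inf_{Ω₊}|p(z)| where γ² = a₁/a₂ for given 0 < a₁ < a₂. Then for all n, the number of eigenvalues of A_n^+ in the interval (a₁, a₂) is at most m. -/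
open MeasureTheory Polynomial

noncomputable section
namespace Stmt8Aux

def ip (Ω : Set ℂ) (f g : Polynomial ℂ) : ℂ :=
  ∫ z in Ω, (starRingEnd ℂ) (f.eval z) * g.eval z

def qR (Ω : Set ℂ) (f : Polynomial ℂ) : ℝ :=
  ∫ z in Ω, ‖f.eval z‖ ^ 2

lemma ip_cont (f g : Polynomial ℂ) :
    Continuous (fun z => (starRingEnd ℂ) (f.eval z) * g.eval z) :=
  ((Complex.continuous_conj.comp f.continuous).mul g.continuous)

lemma ip_integrable {Ω : Set ℂ} (hΩ : IsCompact Ω) (f g : Polynomial ℂ) :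
    IntegrableOn (fun z => (starRingEnd ℂ) (f.eval z) * g.eval z) Ω volume :=
  (ip_cont f g).continuousOn.integrableOn_compact hΩ

lemma ip_add_left {Ω : Set ℂ} (hΩ : IsCompact Ω) (f g h : Polynomial ℂ) :
    ip Ω (f + g) h = ip Ω f h + ip Ω g h := by
  unfold ip
  rw [← integral_add (ip_integrable hΩ f h) (ip_integrable hΩ g h)]
  congr 1; ext z; simp [eval_add, map_add, add_mul]

lemma ip_add_right {Ω : Set ℂ} (hΩ : IsCompact Ω) (f g h : Polynomial ℂ) :
    ip Ω f (g + h) = ip Ω f g + ip Ω f h := by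
  unfold ip
  rw [← integral_add (ip_integrable hΩ f g) (ip_integrable hΩ f h)]
  congr 1; ext z; simp [eval_add, mul_add]

lemma ip_smul_left (Ω : Set ℂ) (c : ℂ) (f g : Polynomial ℂ) :
    ip Ω (c • f) g = (starRingEnd ℂ) c * ip Ω f g := by
  unfold ip
  rw [← integral_const_mul]
  congr 1; ext z; simp [mul_assoc]

lemma ip_smul_right (Ω : Set ℂ) (c : ℂ) (f g : Polynomial ℂ) :
    ip Ω f (c • g) = c * ip Ω f g := by
  unfold ip
  rw [← integral_const_mul]
  congr 1; ext z; simp; ring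

lemma ip_zero_left (Ω : Set ℂ) (g : Polynomial ℂ) : ip Ω 0 g = 0 := by
  unfold ip; simp

lemma ip_zero_right (Ω : Set ℂ) (g : Polynomial ℂ) : ip Ω g 0 = 0 := by
  unfold ip; simp

lemma ip_conj (Ω : Set ℂ) (f g : Polynomial ℂ) :
    (starRingEnd ℂ) (ip Ω f g) = ip Ω g f := by
  unfold ip
  rw [← integral_conj]
  congr 1; ext z; simp [mul_comm]

lemma conj_mul_self' (w : ℂ) : (starRingEnd ℂ) w * w = ((‖w‖ ^ 2 : ℝ) : ℂ) := by
  rw [mul_comm, Complex.mul_conj, Complex.normSq_eq_norm_sq]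

lemma ip_self (Ω : Set ℂ) (f : Polynomial ℂ) : ip Ω f f = ((qR Ω f : ℝ) : ℂ) := by
  have h1 : ip Ω f f = ∫ z in Ω, ((‖f.eval z‖ ^ 2 : ℝ) : ℂ) := by
    unfold ip; congr 1; ext z; exact conj_mul_self' _
  rw [h1]
  exact integral_ofReal

lemma qR_integrable {Ω : Set ℂ} (hΩ : IsCompact Ω) (f : Polynomial ℂ) :
    IntegrableOn (fun z => ‖f.eval z‖ ^ 2) Ω volume :=
  ((f.continuous.norm.pow 2)).continuousOn.integrableOn_compact hΩ

lemma qR_nonneg {Ω : Set ℂ} (f : Polynomial ℂ) : 0 ≤ qR Ω f :=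
  integral_nonneg (fun z => by positivity)

lemma qR_pos {Ω : Set ℂ} (hΩ : IsCompact Ω) (hpos : 0 < volume Ω)
    {f : Polynomial ℂ} (hf : f ≠ 0) : 0 < qR Ω f := by
  unfold qR
  rw [setIntegral_pos_iff_support_of_nonneg_ae
    (Filter.Eventually.of_forall fun z => by positivity) (qR_integrable hΩ f)]
  have hroots : ({z : ℂ | f.IsRoot z}).Finite := f.finite_setOf_isRoot hf
  have hz : volume ({z : ℂ | f.IsRoot z}) = 0 := hroots.measure_zero _
  have hsub : Ω ⊆ (Function.support (fun z => ‖f.eval z‖ ^ 2) ∩ Ω) ∪ {z : ℂ | f.IsRoot z} := by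
    intro z hz'
    by_cases h : f.eval z = 0
    · exact Or.inr h
    · exact Or.inl ⟨by simp [Function.mem_support, h], hz'⟩
  calc (0:ENNReal) < volume Ω := hpos
    _ ≤ volume ((Function.support (fun z => ‖f.eval z‖ ^ 2) ∩ Ω) ∪ {z : ℂ | f.IsRoot z}) :=
        measure_mono hsub
    _ ≤ volume (Function.support (fun z => ‖f.eval z‖ ^ 2) ∩ Ω) + volume {z : ℂ | f.IsRoot z} :=
        measure_union_le _ _
    _ = volume (Function.support (fun z => ‖f.eval z‖ ^ 2) ∩ Ω) := by rw [hz, add_zero]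

lemma ip_sum_left {Ω : Set ℂ} (hΩ : IsCompact Ω) {ι : Type*} (s : Finset ι)
    (v : ι → Polynomial ℂ) (h : Polynomial ℂ) :
    ip Ω (∑ i ∈ s, v i) h = ∑ i ∈ s, ip Ω (v i) h := by
  classical
  induction s using Finset.induction_on with
  | empty => simpa using ip_zero_left Ω h
  | insert _ _ hx ih => rw [Finset.sum_insert hx, Finset.sum_insert hx, ip_add_left hΩ, ih]

lemma ip_sum_right {Ω : Set ℂ} (hΩ : IsCompact Ω) {ι : Type*} (s : Finset ι)
    (v : ι → Polynomial ℂ) (h : Polynomial ℂ) :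
    ip Ω h (∑ i ∈ s, v i) = ∑ i ∈ s, ip Ω h (v i) := by
  classical
  induction s using Finset.induction_on with
  | empty => simpa using ip_zero_right Ω h
  | insert _ _ hx ih => rw [Finset.sum_insert hx, Finset.sum_insert hx, ip_add_right hΩ, ih]

lemma ip_expand {Ω : Set ℂ} (hΩ : IsCompact Ω) {k : ℕ} (s : Finset (Fin k))
    (c : Fin k → ℂ) (U : Fin k → Polynomial ℂ) :
    ip Ω (∑ i ∈ s, c i • U i) (∑ j ∈ s, c j • U j)
      = ∑ i ∈ s, ∑ j ∈ s, (starRingEnd ℂ) (c i) * (c j * ip Ω (U i) (U j)) := by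
  rw [ip_sum_left hΩ]
  refine Finset.sum_congr rfl fun i _ => ?_
  rw [ip_smul_left, ip_sum_right hΩ, Finset.mul_sum]
  refine Finset.sum_congr rfl fun j _ => ?_
  rw [ip_smul_right]

instance instFD (k : ℕ) : FiniteDimensional ℂ (degreeLT ℂ k) :=
  Module.Finite.equiv (Polynomial.degreeLTEquiv ℂ k).symm

lemma finrank_degreeLT (k : ℕ) :
    Module.finrank ℂ (degreeLT ℂ k) = k := by
  rw [(Polynomial.degreeLTEquiv ℂ k).finrank_eq]
  simp [Module.finrank_pi]

lemma spec {Ωp : Set ℂ} (hcp : IsCompact Ωp) (hposp : 0 < volume Ωp) (k : ℕ)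
    (T : Module.End ℂ (degreeLT ℂ (k+1)))
    (hsymm : ∀ f g : degreeLT ℂ (k+1), ip Ωp (T f : Polynomial ℂ) (g : Polynomial ℂ)
      = ip Ωp (f : Polynomial ℂ) (T g : Polynomial ℂ)) :
    ∃ (u : Fin (k+1) → degreeLT ℂ (k+1)) (lam : Fin (k+1) → ℝ),
      (∀ i j, ip Ωp (u i : Polynomial ℂ) (u j : Polynomial ℂ) = if i = j then 1 else 0) ∧
      (∀ i, T (u i) = ((lam i : ℂ)) • u i) ∧
      (∀ (f : degreeLT ℂ (k+1)) (μ : ℂ), T f = μ • f →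
        ∃ c : Fin (k+1) → ℂ, (∀ i, ((lam i : ℂ)) ≠ μ → c i = 0) ∧ f = ∑ i, c i • u i) := by
  letI core : InnerProductSpace.Core ℂ (degreeLT ℂ (k+1)) :=
  { inner := fun f g => ip Ωp (f : Polynomial ℂ) (g : Polynomial ℂ)
    conj_inner_symm := fun f g => ip_conj Ωp _ _
    re_inner_nonneg := fun f => by
      have h2 : (ip Ωp (f : Polynomial ℂ) f : ℂ) = ((qR Ωp (f : Polynomial ℂ) : ℝ) : ℂ) :=
        ip_self _ _
      show 0 ≤ RCLike.re (ip Ωp (f : Polynomial ℂ) (f : Polynomial ℂ))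
      rw [h2]
      have h3 : (0:ℝ) ≤ qR Ωp (f : Polynomial ℂ) := integral_nonneg (fun z => by positivity)
      simpa using h3
    add_left := fun x y z => by
      show ip Ωp ((x : Polynomial ℂ) + y) z = _
      exact ip_add_left hcp _ _ _
    smul_left := fun x y r => by
      show ip Ωp (r • (x : Polynomial ℂ)) y = _
      exact ip_smul_left Ωp _ _ _
    definite := fun x hx => by
      by_contra hne
      have hx0 : (x : Polynomial ℂ) ≠ 0 := fun h => hne (Subtype.ext h)
      have hq := qR_pos hcp hposp hx0
      have h2 : (ip Ωp (x : Polynomial ℂ) x : ℂ) = ((qR Ωp (x : Polynomial ℂ) : ℝ) : ℂ) :=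
        ip_self _ _
      have hx' : ip Ωp (x : Polynomial ℂ) (x : Polynomial ℂ) = 0 := hx
      rw [h2] at hx'
      exact absurd (Complex.ofReal_eq_zero.mp hx') (ne_of_gt hq) }
  letI : NormedAddCommGroup (degreeLT ℂ (k+1)) := core.toNormedAddCommGroup
  letI : InnerProductSpace ℂ (degreeLT ℂ (k+1)) := InnerProductSpace.ofCore core.toCore
  have hT : (T : degreeLT ℂ (k+1) →ₗ[ℂ] degreeLT ℂ (k+1)).IsSymmetric := by
    intro x y
    exact hsymm x y
  have hn : Module.finrank ℂ (degreeLT ℂ (k+1)) = k + 1 := finrank_degreeLT (k+1)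
  set b := hT.eigenvectorBasis hn with hb
  refine ⟨fun i => b i, hT.eigenvalues hn, ?_, ?_, ?_⟩
  · intro i j
    have := orthonormal_iff_ite.mp b.orthonormal i j
    exact this
  · intro i
    exact hT.apply_eigenvectorBasis hn i
  · intro f μ hf
    refine ⟨fun i => b.repr f i, ?_, ?_⟩
    · intro i hi
      have hrep : f = ∑ i, b.repr f i • b i := (b.sum_repr f).symm
      have hTf : T f = ∑ j, ((hT.eigenvalues hn j : ℂ) * b.repr f j) • b j := by
        conv_lhs => rw [hrep]
        rw [map_sum]
        refine Finset.sum_congr rfl fun j _ => ?_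
        rw [LinearMap.map_smul, hT.apply_eigenvectorBasis hn j, smul_smul, mul_comm]
        rfl
      have hμf : T f = ∑ j, (μ * b.repr f j) • b j := by
        rw [hf]
        conv_lhs => rw [hrep]
        rw [Finset.smul_sum]
        exact Finset.sum_congr rfl fun j _ => smul_smul _ _ _
      have hzero : ∑ j, (((hT.eigenvalues hn j : ℂ) * b.repr f j) - (μ * b.repr f j)) • b j
          = 0 := by
        simp only [sub_smul, Finset.sum_sub_distrib]
        rw [← hTf, ← hμf, sub_self]
      have hli := Fintype.linearIndependent_iff.mp b.orthonormal.linearIndependent _ hzero i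
      have : ((hT.eigenvalues hn i : ℂ) - μ) * b.repr f i = 0 := by linear_combination hli
      rcases mul_eq_zero.mp this with h | h
      · exact absurd (by linear_combination h) hi
      · exact h
    · exact (b.sum_repr f).symm

end Stmt8Aux
end

open Stmt8Aux

/-- Number of eigenvalues (counted with eigenspace multiplicity) of an endomorphism in
a set `S` of real numbers. -/
noncomputable def eigCount {E : Type*} [AddCommGroup E] [Module ℂ E]
    (T : Module.End ℂ E) (S : Set ℝ) : ℕ :=
  ∑ᶠ μ ∈ S, Module.finrank ℂ (T.eigenspace (μ : ℂ))

/-- Lemma 3.1: let `Ωp, Ωm ⊂ ℂ` be compact sets of positive measure, and let `A n` be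
the operator on polynomials of degree `≤ n` with the `L²(Ωp)` inner product whose
quadratic form is the `L²(Ωm)` norm. If there is a polynomial `p ≢ 0` with
`sup_{Ωm}|p| ≤ γ inf_{Ωp}|p|` where `γ² = a₁/a₂`, `0 < a₁ < a₂`, then for all `n`
the number of eigenvalues of `A n` in `(a₁, a₂)` is at most `deg p`. -/
theorem stmt8 (Ωp Ωm : Set ℂ) (hcp : IsCompact Ωp) (hcm : IsCompact Ωm)
    (hposp : 0 < volume Ωp) (hposm : 0 < volume Ωm)
    (A : ∀ n : ℕ, Module.End ℂ (Polynomial.degreeLT ℂ (n + 1)))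
    (hA : ∀ n : ℕ, ∀ p q : Polynomial.degreeLT ℂ (n + 1),
      (∫ z in Ωp, (starRingEnd ℂ) (((A n p : Polynomial ℂ)).eval z) * (q : Polynomial ℂ).eval z)
        = ∫ z in Ωm, (starRingEnd ℂ) ((p : Polynomial ℂ).eval z) * (q : Polynomial ℂ).eval z)
    (a₁ a₂ : ℝ) (ha₁ : 0 < a₁) (ha₁₂ : a₁ < a₂)
    (γ : ℝ) (hγ : γ ^ 2 = a₁ / a₂)
    (p : Polynomial ℂ) (hp : p ≠ 0)
    (hsep : ∀ z ∈ Ωm, ∀ w ∈ Ωp, ‖p.eval z‖ ≤ γ * ‖p.eval w‖) :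
    ∀ n : ℕ, eigCount (A n) (Set.Ioo a₁ a₂) ≤ p.natDegree := by
  classical
  intro n
  set m := p.natDegree with hm
  -- hA in terms of ip
  have hA' : ∀ (f g : degreeLT ℂ (n+1)),
      ip Ωp ((A n f : Polynomial ℂ)) (g : Polynomial ℂ)
        = ip Ωm (f : Polynomial ℂ) (g : Polynomial ℂ) := fun f g => hA n f g
  have hsymm : ∀ f g : degreeLT ℂ (n+1),
      ip Ωp ((A n) f : Polynomial ℂ) (g : Polynomial ℂ)
        = ip Ωp (f : Polynomial ℂ) ((A n) g : Polynomial ℂ) := by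
    intro f g
    rw [hA' f g, ← ip_conj Ωp, hA' g f, ip_conj]
  obtain ⟨u, lam, horth, heig, hdecomp⟩ := spec hcp hposp n (A n) hsymm
  set U : Fin (n+1) → Polynomial ℂ := fun i => (u i : Polynomial ℂ) with hU
  -- inner products of eigenvectors on Ωm
  have horthm : ∀ i j, ip Ωm (U i) (U j) = ((lam i : ℂ)) * (if i = j then 1 else 0) := by
    intro i j
    have h1 : ip Ωm (U i) (U j) = ip Ωp ((A n (u i) : Polynomial ℂ)) (U j) := (hA' _ _).symm
    have h2 : ((A n (u i) : Polynomial ℂ)) = (lam i : ℂ) • U i := by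
      rw [heig i]; rfl
    rw [h1, h2, ip_smul_left, horth, Complex.conj_ofReal]
  -- quadratic forms of combinations
  have expand : ∀ (Ω : Set ℂ), IsCompact Ω → ∀ (w : Fin (n+1) → ℝ),
      (∀ i j, ip Ω (U i) (U j) = ((w i : ℂ)) * (if i = j then 1 else 0)) →
      ∀ (s : Finset (Fin (n+1))) (c : Fin (n+1) → ℂ),
      qR Ω (∑ i ∈ s, c i • U i) = ∑ i ∈ s, w i * ‖c i‖ ^ 2 := by
    intro Ω hΩ w hw s c
    have h1 : ((qR Ω (∑ i ∈ s, c i • U i) : ℝ) : ℂ)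
        = ∑ i ∈ s, ((w i * ‖c i‖ ^ 2 : ℝ) : ℂ) := by
      rw [← ip_self, ip_expand hΩ]
      refine Finset.sum_congr rfl fun i hi => ?_
      have h2 : ∀ j ∈ s, (starRingEnd ℂ) (c i) * (c j * ip Ω (U i) (U j))
          = if i = j then (starRingEnd ℂ) (c i) * c i * (w i : ℂ) else 0 := by
        intro j _
        rw [hw i j]
        by_cases h : i = j
        · subst h; simp; ring
        · simp [h]
      rw [Finset.sum_congr rfl h2, Finset.sum_ite_eq s i, if_pos hi, conj_mul_self']
      push_cast
      ring
    have h2 : ((qR Ω (∑ i ∈ s, c i • U i) : ℝ) : ℂ)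
        = ((∑ i ∈ s, w i * ‖c i‖ ^ 2 : ℝ) : ℂ) := by
      rw [h1]; push_cast; ring
    exact Complex.ofReal_inj.mp h2
  have hqp : ∀ (s : Finset (Fin (n+1))) (c : Fin (n+1) → ℂ),
      qR Ωp (∑ i ∈ s, c i • U i) = ∑ i ∈ s, ‖c i‖ ^ 2 := by
    intro s c
    have := expand Ωp hcp (fun _ => 1) (fun i j => by rw [horth]; simp) s c
    simpa using this
  have hqm : ∀ (s : Finset (Fin (n+1))) (c : Fin (n+1) → ℂ),
      qR Ωm (∑ i ∈ s, c i • U i) = ∑ i ∈ s, lam i * ‖c i‖ ^ 2 :=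
    fun s c => expand Ωm hcm lam horthm s c
  -- coefficients vanish if combination is zero
  have coeff_zero : ∀ (s : Finset (Fin (n+1))) (c : Fin (n+1) → ℂ),
      (∑ i ∈ s, c i • U i) = 0 → ∀ i ∈ s, c i = 0 := by
    intro s c h i hi
    have h0 : ip Ωp (U i) (∑ j ∈ s, c j • U j) = c i := by
      rw [ip_sum_right hcp]
      have h2 : ∀ j ∈ s, ip Ωp (U i) (c j • U j) = if i = j then c j else 0 := by
        intro j _
        rw [ip_smul_right, horth]
        by_cases h : i = j
        · subst h; simp
        · simp [h]
      rw [Finset.sum_congr rfl h2, Finset.sum_ite_eq s i, if_pos hi]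
    rw [h, ip_zero_right] at h0
    exact h0.symm
  -- strict bounds on combinations
  have hlt : ∀ (s : Finset (Fin (n+1))) (c : Fin (n+1) → ℂ),
      (∀ i ∈ s, lam i < a₂) → (∃ i ∈ s, c i ≠ 0) →
      qR Ωm (∑ i ∈ s, c i • U i) < a₂ * qR Ωp (∑ i ∈ s, c i • U i) := by
    intro s c hs ⟨i₀, hi₀, hc₀⟩
    rw [hqm s c, hqp s c, Finset.mul_sum]
    refine Finset.sum_lt_sum (fun i hi => ?_) ⟨i₀, hi₀, ?_⟩
    · rcases eq_or_ne (c i) 0 with h | h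
      · simp [h]
      · exact mul_le_mul_of_nonneg_right (le_of_lt (hs i hi)) (by positivity)
    · have hpos2 : (0:ℝ) < ‖c i₀‖ ^ 2 := pow_pos (norm_pos_iff.mpr hc₀) 2
      exact (mul_lt_mul_of_pos_right (hs i₀ hi₀) hpos2)
  have hgt : ∀ (s : Finset (Fin (n+1))) (c : Fin (n+1) → ℂ),
      (∀ i ∈ s, a₁ < lam i) → (∃ i ∈ s, c i ≠ 0) →
      a₁ * qR Ωp (∑ i ∈ s, c i • U i) < qR Ωm (∑ i ∈ s, c i • U i) := by
    intro s c hs ⟨i₀, hi₀, hc₀⟩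
    rw [hqm s c, hqp s c, Finset.mul_sum]
    refine Finset.sum_lt_sum (fun i hi => ?_) ⟨i₀, hi₀, ?_⟩
    · rcases eq_or_ne (c i) 0 with h | h
      · simp [h]
      · exact mul_le_mul_of_nonneg_right (le_of_lt (hs i hi)) (by positivity)
    · have hpos2 : (0:ℝ) < ‖c i₀‖ ^ 2 := pow_pos (norm_pos_iff.mpr hc₀) 2
      exact (mul_lt_mul_of_pos_right (hs i₀ hi₀) hpos2)
  -- min of |p| on Ωp, basic positivity
  have hΩpne : Ωp.Nonempty := nonempty_of_measure_ne_zero (ne_of_gt hposp)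
  have hΩmne : Ωm.Nonempty := nonempty_of_measure_ne_zero (ne_of_gt hposm)
  obtain ⟨w₀, hw₀, hmin⟩ := hcp.exists_isMinOn hΩpne (p.continuous.norm.continuousOn)
  set c₀ : ℝ := ‖p.eval w₀‖ with hc₀def
  have hminle : ∀ w ∈ Ωp, c₀ ≤ ‖p.eval w‖ := fun w hw => hmin hw
  have hγc₀ : 0 ≤ γ * c₀ := by
    obtain ⟨z₀, hz₀⟩ := hΩmne
    exact le_trans (norm_nonneg _) (hsep z₀ hz₀ w₀ hw₀)
  -- key bound: for g = p * f with f a combination from small eigenvalues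
  have key : ∀ (s : Finset (Fin (n+1))) (c : Fin (n+1) → ℂ),
      (∀ i ∈ s, lam i < a₂) → (∃ i ∈ s, c i ≠ 0) →
      qR Ωm (p * (∑ i ∈ s, c i • U i)) < a₁ * qR Ωp (p * (∑ i ∈ s, c i • U i)) := by
    intro s c hs hex
    set f := ∑ i ∈ s, c i • U i with hf
    have hfne : f ≠ 0 := by
      intro h0
      obtain ⟨i₀, hi₀, hc₀⟩ := hex
      exact hc₀ (coeff_zero s c h0 i₀ hi₀)
    have hgne : p * f ≠ 0 := mul_ne_zero hp hfne
    have hub : qR Ωm (p * f) ≤ (γ * c₀) ^ 2 * qR Ωm f := by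
      have := setIntegral_mono_on (qR_integrable hcm (p*f))
        (((qR_integrable hcm f).const_mul ((γ * c₀)^2))) hcm.measurableSet ?_
      · unfold qR
        calc (∫ z in Ωm, ‖(p*f).eval z‖ ^ 2)
            ≤ ∫ z in Ωm, (γ * c₀) ^ 2 * ‖f.eval z‖ ^ 2 := this
          _ = (γ * c₀) ^ 2 * ∫ z in Ωm, ‖f.eval z‖ ^ 2 := integral_const_mul _ _
      · intro z hz
        have h1 : ‖p.eval z‖ ≤ γ * c₀ := hsep z hz w₀ hw₀
        have : ‖(p*f).eval z‖ = ‖p.eval z‖ * ‖f.eval z‖ := by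
          rw [eval_mul, norm_mul]
        rw [this, mul_pow]
        exact mul_le_mul_of_nonneg_right
          (pow_le_pow_left₀ (norm_nonneg _) h1 2) (by positivity)
    have hlb : c₀ ^ 2 * qR Ωp f ≤ qR Ωp (p * f) := by
      have := setIntegral_mono_on
        (((qR_integrable hcp f).const_mul (c₀^2))) (qR_integrable hcp (p*f))
        hcp.measurableSet ?_
      · unfold qR
        calc c₀ ^ 2 * ∫ z in Ωp, ‖f.eval z‖ ^ 2
            = ∫ z in Ωp, c₀ ^ 2 * ‖f.eval z‖ ^ 2 := (integral_const_mul _ _).symm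
          _ ≤ ∫ z in Ωp, ‖(p*f).eval z‖ ^ 2 := this
      · intro z hz
        have h1 : c₀ ≤ ‖p.eval z‖ := hminle z hz
        have h2 : ‖(p*f).eval z‖ = ‖p.eval z‖ * ‖f.eval z‖ := by
          rw [eval_mul, norm_mul]
        rw [h2, mul_pow]
        exact mul_le_mul_of_nonneg_right
          (pow_le_pow_left₀ (by positivity) h1 2) (by positivity)
    have hmf : qR Ωm f < a₂ * qR Ωp f := hlt s c hs hex
    rcases lt_or_eq_of_le hγc₀ with hpos | hzero
    · have ha₂ : (0:ℝ) < a₂ := lt_trans ha₁ ha₁₂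
      have hc₀pos : 0 < c₀ := by
        rcases lt_or_eq_of_le (norm_nonneg (p.eval w₀)) with h | h
        · exact h
        · exfalso
          rw [hc₀def, ← h, mul_zero] at hpos
          exact lt_irrefl 0 hpos
      calc qR Ωm (p * f) ≤ (γ * c₀) ^ 2 * qR Ωm f := hub
        _ < (γ * c₀) ^ 2 * (a₂ * qR Ωp f) := by
            apply mul_lt_mul_of_pos_left hmf (by positivity)
        _ = a₁ * (c₀ ^ 2 * qR Ωp f) := by
            have hg2 : γ ^ 2 * a₂ = a₁ := by
              rw [hγ]; field_simp
            linear_combination (c₀ ^ 2 * qR Ωp f) * hg2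
        _ ≤ a₁ * qR Ωp (p * f) := by
            apply mul_le_mul_of_nonneg_left hlb (le_of_lt ha₁)
    · have h0 : qR Ωm (p * f) ≤ 0 := by
        rw [← hzero] at hub
        simpa using hub
      have h1 : qR Ωm (p * f) = 0 := le_antisymm h0 (qR_nonneg _)
      rw [h1]
      exact mul_pos ha₁ (qR_pos hcp hposp hgne)
  -- the two index sets
  set A' : Finset (Fin (n+1)) := Finset.univ.filter (fun i => lam i < a₂) with hA'def
  set B' : Finset (Fin (n+1)) := Finset.univ.filter (fun i => a₁ < lam i) with hB'def
  -- membership of shifted vectors in degreeLT (n+m+1)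
  have hUmem : ∀ i, U i ∈ degreeLT ℂ (n + m + 1) := by
    intro i
    exact Polynomial.degreeLT_mono (by omega) (u i).2
  have hUdeg : ∀ i, (U i).natDegree ≤ n := by
    intro i
    rcases eq_or_ne (U i) 0 with h | h
    · simp [h]
    · have := Polynomial.mem_degreeLT.mp (u i).2
      have := (Polynomial.natDegree_lt_iff_degree_lt h).mpr this
      omega
  have hpUmem : ∀ i, p * U i ∈ degreeLT ℂ (n + m + 1) := by
    intro i
    rcases eq_or_ne (U i) 0 with h | h
    · simp [h, Submodule.zero_mem]
    · rw [Polynomial.mem_degreeLT]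
      have hne : p * U i ≠ 0 := mul_ne_zero hp h
      rw [← Polynomial.natDegree_lt_iff_degree_lt hne]
      rw [Polynomial.natDegree_mul hp h]
      have := hUdeg i
      omega
  -- the linearly independent family
  set W : (↥A' ⊕ ↥B') → degreeLT ℂ (n + m + 1) :=
    Sum.elim (fun i => ⟨p * U i.1, hpUmem i.1⟩) (fun i => ⟨U i.1, hUmem i.1⟩) with hWdef
  have hWli : LinearIndependent ℂ W := by
    rw [Fintype.linearIndependent_iff]
    intro g hg
    set cA : Fin (n+1) → ℂ := fun j => if h : j ∈ A' then g (Sum.inl ⟨j, h⟩) else 0 with hcA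
    set cB : Fin (n+1) → ℂ := fun j => if h : j ∈ B' then g (Sum.inr ⟨j, h⟩) else 0 with hcB
    set f := ∑ j ∈ A', cA j • U j with hfdef
    set h := ∑ j ∈ B', cB j • U j with hhdef
    have hcoe : (∑ i : ↥A' ⊕ ↥B', g i • ((W i : Polynomial ℂ))) = 0 := by
      have h0 := congrArg ((degreeLT ℂ (n+m+1)).subtype) hg
      rw [map_sum, map_zero] at h0
      simpa using h0
    have hpoly : p * f + h = 0 := by
      rw [Fintype.sum_sum_type] at hcoe
      have h1 : (∑ a : ↥A', g (Sum.inl a) • ((W (Sum.inl a) : Polynomial ℂ)))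
          = ∑ j ∈ A', cA j • (p * U j) := by
        rw [← Finset.sum_coe_sort A' (fun j => cA j • (p * U j))]
        refine Finset.sum_congr rfl fun a _ => ?_
        have : cA (↑a) = g (Sum.inl a) := by
          rw [hcA]; simp [a.2]
        rw [this]
        rfl
      have h2 : (∑ b : ↥B', g (Sum.inr b) • ((W (Sum.inr b) : Polynomial ℂ)))
          = ∑ j ∈ B', cB j • U j := by
        rw [← Finset.sum_coe_sort B' (fun j => cB j • U j)]
        refine Finset.sum_congr rfl fun b _ => ?_
        have : cB (↑b) = g (Sum.inr b) := by
          rw [hcB]; simp [b.2]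
        rw [this]
        rfl
      rw [h1, h2] at hcoe
      rw [← hcoe, hfdef, Finset.mul_sum, hhdef]
      congr 1
      exact Finset.sum_congr rfl fun j _ => mul_smul_comm (cA j) p (U j)
    by_cases hf0 : f = 0
    · have hh0 : h = 0 := by
        rw [hf0, mul_zero, zero_add] at hpoly; exact hpoly
      intro i
      cases i with
      | inl a =>
        have hca := coeff_zero A' cA (by rw [← hfdef]; exact hf0) (↑a) a.2
        rw [hcA] at hca
        simpa [a.2] using hca
      | inr b =>
        have hcb := coeff_zero B' cB (by rw [← hhdef]; exact hh0) (↑b) b.2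
        rw [hcB] at hcb
        simpa [b.2] using hcb
    · exfalso
      have hexA : ∃ i ∈ A', cA i ≠ 0 := by
        by_contra hall
        push_neg at hall
        apply hf0
        rw [hfdef]
        exact Finset.sum_eq_zero fun i hi => by rw [hall i hi, zero_smul]
      have hkey : qR Ωm (p * f) < a₁ * qR Ωp (p * f) :=
        key A' cA (fun i hi => (Finset.mem_filter.mp hi).2) hexA
      have hh : h = -(p * f) := eq_neg_of_add_eq_zero_right hpoly
      have hgne : p * f ≠ 0 := mul_ne_zero hp hf0
      have hhne : h ≠ 0 := by rw [hh]; simpa using hgne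
      have hexB : ∃ i ∈ B', cB i ≠ 0 := by
        by_contra hall
        push_neg at hall
        apply hhne
        rw [hhdef]
        exact Finset.sum_eq_zero fun i hi => by rw [hall i hi, zero_smul]
      have hgtB : a₁ * qR Ωp h < qR Ωm h :=
        hgt B' cB (fun i hi => (Finset.mem_filter.mp hi).2) hexB
      have hqm_eq : qR Ωm h = qR Ωm (p * f) := by
        rw [hh]; unfold qR; simp [eval_neg]
      have hqp_eq : qR Ωp h = qR Ωp (p * f) := by
        rw [hh]; unfold qR; simp [eval_neg]
      rw [hqm_eq, hqp_eq] at hgtB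
      linarith
  -- cardinality bound from linear independence
  have hcard : A'.card + B'.card ≤ n + m + 1 := by
    have h1 := hWli.fintype_card_le_finrank
    rw [finrank_degreeLT (n+m+1)] at h1
    simpa [Fintype.card_sum, Fintype.card_coe] using h1
  -- counting: A' ∪ B' = univ
  have hunion : A' ∪ B' = Finset.univ := by
    ext i
    simp only [Finset.mem_union, hA'def, hB'def, Finset.mem_filter, Finset.mem_univ,
      true_and, iff_true]
    rcases lt_or_ge (lam i) a₂ with h | h
    · exact Or.inl h
    · exact Or.inr (lt_of_lt_of_le ha₁₂ h)
  set sIoo : Finset (Fin (n+1)) :=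
    Finset.univ.filter (fun i => lam i ∈ Set.Ioo a₁ a₂) with hsIoodef
  have hAB : A' ∩ B' = sIoo := by
    ext i
    simp only [Finset.mem_inter, hA'def, hB'def, hsIoodef, Finset.mem_filter,
      Finset.mem_univ, true_and, Set.mem_Ioo]
    tauto
  have hsIoocard : sIoo.card ≤ m := by
    have h1 := Finset.card_union_add_card_inter A' B'
    rw [hunion, hAB] at h1
    have h2 : (Finset.univ : Finset (Fin (n+1))).card = n + 1 := by
      simp
    omega
  -- eigenspace dimension bound
  have hdim : ∀ μ : ℝ, Module.finrank ℂ ((A n).eigenspace ((μ:ℝ):ℂ))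
      ≤ (Finset.univ.filter (fun i => lam i = μ)).card := by
    intro μ
    set fib : Finset (Fin (n+1)) := Finset.univ.filter (fun i => lam i = μ) with hfib
    have hle : (A n).eigenspace ((μ:ℝ):ℂ) ≤ Submodule.span ℂ ((fun i => u i) '' ↑fib) := by
      intro f hf
      rw [Module.End.mem_eigenspace_iff] at hf
      obtain ⟨c, hc0, hrep⟩ := hdecomp f _ hf
      have hsum : f = ∑ i ∈ fib, c i • u i := by
        rw [hrep]
        symm
        apply Finset.sum_subset (Finset.subset_univ _)
        intro i _ hnot
        have hne : lam i ≠ μ := by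
          intro heq
          exact hnot (by rw [hfib]; simp [heq])
        have : c i = 0 := hc0 i (fun hh => hne (Complex.ofReal_inj.mp hh))
        rw [this, zero_smul]
      rw [hsum]
      exact Submodule.sum_mem _ fun i hi =>
        Submodule.smul_mem _ _ (Submodule.subset_span ⟨i, hi, rfl⟩)
    calc Module.finrank ℂ ((A n).eigenspace ((μ:ℝ):ℂ))
        ≤ Module.finrank ℂ (Submodule.span ℂ ((fun i => u i) '' ↑fib)) :=
          Submodule.finrank_mono hle
      _ ≤ fib.card := by
          rw [← Finset.coe_image]
          exact le_trans (finrank_span_finset_le_card _) Finset.card_image_le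
  -- the finsum
  set dfun : ℝ → ℕ := fun μ => Module.finrank ℂ ((A n).eigenspace ((μ:ℝ):ℂ)) with hdfun
  have hsupp_sub : (Set.Ioo a₁ a₂ ∩ Function.support dfun)
      ⊆ ↑(Finset.univ.image lam) := by
    rintro μ ⟨hμIoo, hμsupp⟩
    by_contra hnot
    have hnone : ∀ i, lam i ≠ μ := by
      intro i hi
      exact hnot (by simp only [Finset.coe_image, Set.mem_image]; exact ⟨i, by simp, hi⟩)
    have hfibempty : (Finset.univ.filter (fun i => lam i = μ)) = ∅ := by
      apply Finset.filter_eq_empty_iff.mpr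
      intro i _
      exact hnone i
    have := hdim μ
    rw [hfibempty] at this
    simp only [Finset.card_empty, Nat.le_zero] at this
    exact hμsupp this
  have hfin : (Set.Ioo a₁ a₂ ∩ Function.support dfun).Finite :=
    Set.Finite.subset (Finset.finite_toSet _) hsupp_sub
  have heq : eigCount (A n) (Set.Ioo a₁ a₂) = ∑ μ ∈ hfin.toFinset, dfun μ :=
    finsum_mem_eq_sum dfun hfin
  rw [heq]
  have hbound : ∑ μ ∈ hfin.toFinset, dfun μ ≤ sIoo.card := by
    have hdisj : ∀ μ ∈ hfin.toFinset, ∀ ν ∈ hfin.toFinset, μ ≠ ν →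
        Disjoint (Finset.univ.filter (fun i => lam i = μ))
          (Finset.univ.filter (fun i => lam i = ν)) := by
      intro μ _ ν _ hμν
      rw [Finset.disjoint_left]
      intro i hi hi'
      rw [Finset.mem_filter] at hi hi'
      exact hμν (hi.2 ▸ hi'.2 ▸ rfl)
    calc ∑ μ ∈ hfin.toFinset, dfun μ
        ≤ ∑ μ ∈ hfin.toFinset, (Finset.univ.filter (fun i => lam i = μ)).card :=
          Finset.sum_le_sum fun μ _ => hdim μ
      _ = (hfin.toFinset.biUnion (fun μ => Finset.univ.filter (fun i => lam i = μ))).card :=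
          (Finset.card_biUnion hdisj).symm
      _ ≤ sIoo.card := by
          apply Finset.card_le_card
          intro i hi
          rw [Finset.mem_biUnion] at hi
          obtain ⟨μ, hμ, hiμ⟩ := hi
          rw [Set.Finite.mem_toFinset] at hμ
          rw [Finset.mem_filter] at hiμ
          rw [hsIoodef, Finset.mem_filter]
          exact ⟨Finset.mem_univ _, hiμ.2 ▸ hμ.1⟩
  exact le_trans hbound hsIoocard
end

section
/- Suppose λ_n^+(T_{V_+}) ≥ n^{-n} a^n and λ_m^+(T_{V_-}) ≤ m^{-m} b^m for all sufficiently large n, m, where a > b > 0, and suppose λ_{m+n-1}^+(T_{V_+}) ≤ λ_n^+(T_V) + λ_m^+(T_{V_-}) for all m, n. Then T_V has infinitely many positive eigenvalues; more precisely, for every sufficiently large m there exists n = n_m ≤ γ m / log m (for any fixed 0 < γ < log(a/b)) with λ_{n_m}^+(T_V) > 0, and n_m → ∞ can be arranged. -/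
open Filter Asymptotics

private lemma evlog (K c : ℝ) (hK : 0 < K) :
    ∀ᶠ x : ℝ in atTop, c * Real.log x < K * x := by
  have h : (fun x : ℝ => c * Real.log x) =o[atTop] (fun x : ℝ => K * x) := by
    have h1 := Real.isLittleO_log_id_atTop.const_mul_left c
    have h2 : (fun x : ℝ => K * x) = fun x : ℝ => K * (id x) := rfl
    rw [h2, Asymptotics.isLittleO_const_mul_right_iff hK.ne']
    exact h1
  filter_upwards [h.bound one_half_pos, eventually_gt_atTop (0:ℝ)] with x hx hx0
  have hKx : 0 < K * x := mul_pos hK hx0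
  rw [Real.norm_eq_abs, Real.norm_eq_abs, abs_of_pos hKx] at hx
  have := le_abs_self (c * Real.log x)
  linarith

private lemma keyIneq (la lb c : ℝ) (hlab : lb < la) (hc : 0 ≤ c) :
    ∀ᶠ x : ℝ in atTop,
      x * lb - x * Real.log x < (x + c) * la - (x + c) * Real.log (x + c) := by
  have hK : 0 < (la - lb) / 2 := by linarith
  have h2 : Tendsto (fun x : ℝ => ((la - lb) / 2) * x) atTop atTop :=
    tendsto_id.const_mul_atTop hK
  filter_upwards [evlog ((la - lb) / 2) c hK,
    h2.eventually_gt_atTop (c + c * Real.log 2 - c * la),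
    eventually_ge_atTop (1 : ℝ), eventually_ge_atTop c] with x hA hC hx1 hxc
  have hx0 : (0:ℝ) < x := lt_of_lt_of_le one_pos hx1
  have hxc0 : (0:ℝ) < x + c := by linarith
  have hlogdiv : Real.log ((x + c) / x) ≤ (x + c) / x - 1 :=
    Real.log_le_sub_one_of_pos (div_pos hxc0 hx0)
  rw [Real.log_div hxc0.ne' hx0.ne'] at hlogdiv
  have h1 : x * (Real.log (x + c) - Real.log x) ≤ c := by
    have h := mul_le_mul_of_nonneg_left hlogdiv hx0.le
    have hx' : x * ((x + c) / x - 1) = c := by field_simp; ring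
    rw [hx'] at h
    exact h
  have hmono : Real.log (x + c) ≤ Real.log (2 * x) :=
    Real.log_le_log hxc0 (by linarith)
  rw [Real.log_mul two_ne_zero hx0.ne'] at hmono
  have hB : c * Real.log (x + c) ≤ c * (Real.log 2 + Real.log x) :=
    mul_le_mul_of_nonneg_left hmono hc
  nlinarith [h1, hB, hA, hC]

private lemma rpow_eq_exp' (t : ℝ) (ht : 0 < t) {y : ℝ} (hy : 0 < y) :
    y ^ (-y) * t ^ y = Real.exp (y * Real.log t - y * Real.log y) := by
  rw [Real.rpow_def_of_pos hy, Real.rpow_def_of_pos ht, ← Real.exp_add]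
  ring_nf


open scoped InnerProductSpace

/-- The `k`-th positive eigenvalue (in decreasing order, with multiplicity) of a compact
self-adjoint operator, via the Courant–Fischer min-max principle; `0` if the operator
has fewer than `k` positive eigenvalues. -/
noncomputable def lamPlus {H : Type*} [NormedAddCommGroup H] [InnerProductSpace ℂ H]
    (A : H →L[ℂ] H) (k : ℕ) : ℝ :=
  max 0 (⨆ L : {L : Submodule ℂ H // Module.finrank ℂ L = k},
    ⨅ f : {f : H // f ∈ L.1 ∧ f ≠ 0}, (⟪A f.1, f.1⟫_ℂ).re / ‖f.1‖ ^ 2)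

/-- Abstract form of the proof of Theorem 2.2: if `λ⁺_n(T₊) ≥ n^{-n}a^n` and
`λ⁺_m(T₋) ≤ m^{-m}b^m` for large `n, m`, with `a > b > 0`, and the Weyl inequality
`λ⁺_{m+n-1}(T₊) ≤ λ⁺_n(T) + λ⁺_m(T₋)` holds (with `T₊ = T + T₋`), then `T` has
infinitely many positive eigenvalues; in fact, for any fixed `0 < γ < log(a/b)` and
every sufficiently large `m` there is `n = n_m` with `1 ≤ n ≤ γ m / log m` and
`λ⁺_{n_m}(T) > 0`, and `n_m → ∞` can be arranged. -/
theorem stmt11 {H : Type*} [NormedAddCommGroup H] [InnerProductSpace ℂ H] [CompleteSpace H]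
    (T Tp Tm : H →L[ℂ] H)
    (hT : IsSelfAdjoint T) (hTp : IsSelfAdjoint Tp) (hTm : IsSelfAdjoint Tm)
    (hTc : IsCompactOperator T) (hTpc : IsCompactOperator Tp) (hTmc : IsCompactOperator Tm)
    (hsum : Tp = T + Tm)
    (a b : ℝ) (hb : 0 < b) (hab : b < a)
    (hlow : ∃ N : ℕ, ∀ n ≥ N, ((n : ℝ)) ^ (-(n : ℝ)) * a ^ (n : ℝ) ≤ lamPlus Tp n)
    (hup : ∃ N : ℕ, ∀ m ≥ N, lamPlus Tm m ≤ ((m : ℝ)) ^ (-(m : ℝ)) * b ^ (m : ℝ))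
    (hWeyl : ∀ m n : ℕ, 1 ≤ m → 1 ≤ n →
      lamPlus Tp (m + n - 1) ≤ lamPlus T n + lamPlus Tm m) :
    {n : ℕ | 0 < lamPlus T n}.Infinite ∧
    ∀ γ : ℝ, 0 < γ → γ < Real.log (a / b) →
      ∃ M : ℕ, ∀ m ≥ M, ∃ n : ℕ,
        1 ≤ n ∧ (n : ℝ) ≤ γ * m / Real.log m ∧ 0 < lamPlus T n := by
  obtain ⟨N1, hN1⟩ := hlow
  obtain ⟨N2, hN2⟩ := hup
  have hlab : Real.log b < Real.log a := Real.log_lt_log hb hab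
  have key : ∀ n : ℕ, 1 ≤ n → 0 < lamPlus T n := by
    intro n hn
    set c : ℝ := (n : ℝ) - 1 with hcdef
    have hn1 : (1 : ℝ) ≤ (n : ℝ) := by exact_mod_cast hn
    have hc : 0 ≤ c := by rw [hcdef]; linarith
    have hev := keyIneq (Real.log a) (Real.log b) c hlab hc
    have hevn : ∀ᶠ m : ℕ in atTop,
        (m : ℝ) * Real.log b - (m : ℝ) * Real.log (m : ℝ) <
          ((m : ℝ) + c) * Real.log a - ((m : ℝ) + c) * Real.log ((m : ℝ) + c) :=
      tendsto_natCast_atTop_atTop.eventually hev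
    obtain ⟨m, hmkey, hmge⟩ := (hevn.and (eventually_ge_atTop (max (max N1 N2) 1))).exists
    have hm1 : 1 ≤ m := le_trans (le_max_right _ _) hmge
    have hmN1 : N1 ≤ m := le_trans (le_trans (le_max_left _ _) (le_max_left _ _)) hmge
    have hmN2 : N2 ≤ m := le_trans (le_trans (le_max_right _ _) (le_max_left _ _)) hmge
    have hW := hWeyl m n hm1 hn
    have hL := hN1 (m + n - 1) (by omega)
    have hU := hN2 m hmN2
    have hk : ((m + n - 1 : ℕ) : ℝ) = (m : ℝ) + c := by
      have h : m + n - 1 = m + (n - 1) := by omega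
      rw [h, Nat.cast_add, Nat.cast_sub hn, Nat.cast_one, hcdef]
    have hm0 : (0 : ℝ) < (m : ℝ) := by exact_mod_cast hm1
    have hk0 : (0 : ℝ) < (m : ℝ) + c := by linarith
    have hLe : ((m : ℝ)) ^ (-(m : ℝ)) * b ^ (m : ℝ) <
        (((m + n - 1 : ℕ) : ℝ)) ^ (-((m + n - 1 : ℕ) : ℝ)) * a ^ ((m + n - 1 : ℕ) : ℝ) := by
      rw [hk, rpow_eq_exp' b hb hm0, rpow_eq_exp' a (lt_trans hb hab) hk0]
      exact Real.exp_lt_exp.mpr hmkey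
    linarith
  constructor
  · exact (Set.Ici_infinite (1 : ℕ)).mono (fun n hn => key n hn)
  · intro γ hγ0 _
    have hev := evlog γ 1 hγ0
    have hevn : ∀ᶠ m : ℕ in atTop, 1 * Real.log (m : ℝ) < γ * (m : ℝ) :=
      tendsto_natCast_atTop_atTop.eventually hev
    obtain ⟨M, hM⟩ := eventually_atTop.mp (hevn.and (eventually_ge_atTop 2))
    refine ⟨M, fun m hm => ?_⟩
    obtain ⟨hlog, hm2⟩ := hM m hm
    have hm1 : (1 : ℝ) < (m : ℝ) := by exact_mod_cast Nat.lt_of_lt_of_le one_lt_two hm2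
    have hlpos : 0 < Real.log (m : ℝ) := Real.log_pos hm1
    refine ⟨1, le_rfl, ?_, key 1 le_rfl⟩
    rw [Nat.cast_one, le_div_iff₀ hlpos]
    linarith
end

section
/- Let A be a compact self-adjoint nonnegative operator with eigenvalues s_1 ≥ s_2 ≥ ⋯ > 0. If log s_n = −n log n + O(n) as n → ∞, then the eigenvalue counting function satisfies N((λ,∞); A) = |log λ| / log|log λ| · (1 + o(1)) as λ → 0⁺. -/
set_option maxHeartbeats 1000000


open Filter
open scoped InnerProductSpace Topology

/-- If a compact nonnegative self-adjoint operator `A` has eigenvalues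
`s_1 ≥ s_2 ≥ ⋯ > 0` with `log s_n = -n log n + O(n)`, then
`N((λ,∞); A) = |log λ|/log|log λ| · (1 + o(1))` as `λ → 0⁺`. -/
theorem stmt12 {H : Type*} [NormedAddCommGroup H] [InnerProductSpace ℂ H] [CompleteSpace H]
    (A : H →L[ℂ] H) (hA : IsSelfAdjoint A) (hAc : IsCompactOperator A)
    (hApos : ∀ ψ : H, 0 ≤ (⟪A ψ, ψ⟫_ℂ).re)
    (hinf : ∀ n : ℕ, 1 ≤ n → 0 < lamPlus A n)
    (hasymp : ∃ C > (0 : ℝ), ∃ N : ℕ, ∀ n : ℕ, N ≤ n → 1 ≤ n →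
      |Real.log (lamPlus A n) + (n : ℝ) * Real.log n| ≤ C * n) :
    Tendsto
      (fun lam : ℝ =>
        (Nat.card {n : ℕ | 1 ≤ n ∧ lam < lamPlus A n} : ℝ)
          * Real.log |Real.log lam| / |Real.log lam|)
      (𝓝[>] (0 : ℝ)) (𝓝 1) := by
  obtain ⟨C, hC, N, hCN⟩ := hasymp
  set s : ℕ → ℝ := lamPlus A with hs
  set N₁ : ℕ := max N 1 with hN₁def
  have hN₁1 : 1 ≤ N₁ := le_max_right _ _
  -- log bounds
  have hbound : ∀ n : ℕ, N₁ ≤ n →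
      Real.log (s n) ≤ -((n : ℝ) * Real.log n) + C * n ∧
      -((n : ℝ) * Real.log n) - C * n ≤ Real.log (s n) := by
    intro n hn
    have h := hCN n (le_trans (le_max_left _ _) hn) (le_trans (le_max_right _ _) hn)
    obtain ⟨h1, h2⟩ := abs_le.1 h
    constructor <;> linarith
  -- membership criteria
  have hcrit1 : ∀ lam : ℝ, 0 < lam → ∀ n : ℕ, N₁ ≤ n →
      (n : ℝ) * (Real.log n + C) < -Real.log lam → lam < s n := by
    intro lam hlam n hn hlt
    have hsn : 0 < s n := hinf n (le_trans hN₁1 hn)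
    have hb := (hbound n hn).2
    have hexp : Real.log lam < Real.log (s n) := by
      have : (n : ℝ) * (Real.log n + C) = (n : ℝ) * Real.log n + C * n := by ring
      linarith [this ▸ hlt]
    calc lam = Real.exp (Real.log lam) := (Real.exp_log hlam).symm
      _ < Real.exp (Real.log (s n)) := Real.exp_lt_exp.2 hexp
      _ = s n := Real.exp_log hsn
  have hcrit2 : ∀ lam : ℝ, 0 < lam → ∀ n : ℕ, N₁ ≤ n →
      lam < s n → (n : ℝ) * (Real.log n - C) < -Real.log lam := by
    intro lam hlam n hn hlt
    have hb := (hbound n hn).1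
    have hlog : Real.log lam < Real.log (s n) := Real.log_lt_log hlam hlt
    have : (n : ℝ) * (Real.log n - C) = (n : ℝ) * Real.log n - C * n := by ring
    linarith [this]
  -- Tendsto of T = -log lam
  have hT : Tendsto (fun lam : ℝ => -Real.log lam) (𝓝[>] (0 : ℝ)) atTop :=
    tendsto_neg_atBot_atTop.comp Real.tendsto_log_nhdsGT_zero
  have hlogdiv : Tendsto (fun y : ℝ => Real.log y / y) atTop (𝓝 0) :=
    Real.isLittleO_log_id_atTop.tendsto_div_nhds_zero
  have hTlogT : Tendsto (fun T : ℝ => T / Real.log T) atTop atTop := by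
    have h0 : Tendsto (fun y : ℝ => Real.log y / y) atTop (𝓝[>] 0) := by
      rw [tendsto_nhdsWithin_iff]
      refine ⟨hlogdiv, ?_⟩
      filter_upwards [eventually_gt_atTop (1 : ℝ)] with y hy
      exact div_pos (Real.log_pos hy) (by linarith)
    simpa [Pi.inv_def, inv_div] using h0.inv_tendsto_nhdsGT_zero
  have hloglog : Tendsto (fun T : ℝ => (Real.log (Real.log T) + C) / Real.log T)
      atTop (𝓝 0) := by
    have h1 : Tendsto (fun y : ℝ => (Real.log y + C) / y) atTop (𝓝 0) := by
      have hb : Tendsto (fun y : ℝ => C / y) atTop (𝓝 0) :=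
        tendsto_const_nhds.div_atTop tendsto_id
      simpa [add_div] using hlogdiv.add hb
    exact h1.comp Real.tendsto_log_atTop
  have hCdiv : Tendsto (fun T : ℝ => C / Real.log T) atTop (𝓝 0) :=
    (tendsto_const_nhds.div_atTop tendsto_id).comp Real.tendsto_log_atTop
  -- main
  rw [Metric.tendsto_nhds]
  intro ε hε
  set ε' : ℝ := min (ε / 3) (1 / 2) with hε'def
  have hε'pos : 0 < ε' := lt_min (by linarith) one_half_pos
  have hε'le : ε' ≤ 1 / 2 := min_le_right _ _
  have hε'ε : 2 * ε' < ε := by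
    have : ε' ≤ ε / 3 := min_le_left _ _
    linarith
  -- eventual conditions in T
  have hE1 : ∀ᶠ T in atTop, (1 : ℝ) ≤ Real.log T :=
    Real.tendsto_log_atTop.eventually_ge_atTop 1
  have hE2 : ∀ᶠ T in atTop, (Real.log (Real.log T) + C) / Real.log T ≤ ε' / (1 + ε') :=
    hloglog.eventually_le_const (by positivity)
  have hE3 : ∀ᶠ T in atTop, C / Real.log T < ε' / (1 - ε') :=
    hCdiv.eventually_lt_const (div_pos hε'pos (by linarith))
  have hE4 : ∀ᶠ T in atTop, ((N₁ : ℝ) + 1) ≤ (1 - ε') * (T / Real.log T) := by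
    have h : Tendsto (fun T : ℝ => (1 - ε') * (T / Real.log T)) atTop atTop :=
      hTlogT.const_mul_atTop (by linarith)
    exact h.eventually_ge_atTop _
  have hE5 : ∀ᶠ T in atTop, ((N₁ : ℝ) + 1) * (Real.log T / T) ≤ ε' := by
    have h : Tendsto (fun T : ℝ => ((N₁ : ℝ) + 1) * (Real.log T / T)) atTop (𝓝 0) := by
      simpa using hlogdiv.const_mul ((N₁ : ℝ) + 1)
    exact h.eventually_le_const hε'pos
  have hE6 : ∀ᶠ T in atTop, (0 : ℝ) < T := eventually_gt_atTop 0
  have hEv := (((((hE1.and hE2).and hE3).and hE4).and hE5).and hE6)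
  have hEvlam := hT.eventually hEv
  have hlam1 : ∀ᶠ lam : ℝ in 𝓝[>] 0, lam < 1 :=
    eventually_nhdsWithin_of_eventually_nhds (Filter.Tendsto.eventually_lt_const one_pos
      (by exact (tendsto_id : Tendsto id (𝓝 (0:ℝ)) (𝓝 0))))
  have hlam0 : ∀ᶠ lam : ℝ in 𝓝[>] 0, 0 < lam := eventually_mem_nhdsWithin
  filter_upwards [hEvlam, hlam0, hlam1] with lam hP hl0 hl1
  obtain ⟨⟨⟨⟨⟨h1, h2⟩, h3⟩, h4⟩, h5⟩, h6⟩ := hP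
  set T : ℝ := -Real.log lam with hTdef
  have hlogneg : Real.log lam < 0 := Real.log_neg hl0 hl1
  have habs : |Real.log lam| = T := abs_of_neg hlogneg
  have hT0 : 0 < T := h6
  have hlogT1 : (1 : ℝ) ≤ Real.log T := h1
  have hlogT0 : (0 : ℝ) < Real.log T := lt_of_lt_of_le one_pos hlogT1
  set a : ℝ := (1 + ε') * T / Real.log T with hadef
  set b : ℝ := (1 - ε') * T / Real.log T with hbdef
  have ha0 : 0 < a := by positivity
  have hb0 : 0 < b := by
    have : (0:ℝ) < 1 - ε' := by linarith
    positivity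
  have hbN : (N₁ : ℝ) + 1 ≤ b := by
    rw [hbdef, mul_div_assoc]; exact h4
  have hbT : b ≤ T := by
    rw [hbdef, mul_div_assoc]
    have hd : T / Real.log T ≤ T := div_le_self hT0.le hlogT1
    nlinarith [div_pos hT0 hlogT0]
  set K : ℕ := N₁ + ⌈a⌉₊ with hKdef
  set M : ℕ := ⌊b⌋₊ with hMdef
  -- upper inclusion
  have hSub : {n : ℕ | 1 ≤ n ∧ lam < s n} ⊆ Set.Iio K := by
    intro n hn
    obtain ⟨hn1, hns⟩ := hn
    by_contra hcon
    simp only [Set.mem_Iio, not_lt] at hcon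
    have hnN₁ : N₁ ≤ n := le_trans (Nat.le_add_right _ _) hcon
    have hii := hcrit2 lam hl0 n hnN₁ hns
    have hna : a ≤ (n : ℝ) := by
      calc a ≤ (⌈a⌉₊ : ℝ) := Nat.le_ceil a
        _ ≤ (K : ℝ) := by exact_mod_cast Nat.le_add_left _ _
        _ ≤ (n : ℝ) := by exact_mod_cast hcon
    -- show T ≤ n (log n - C), contradiction
    have hlogaT : Real.log T - Real.log (Real.log T) ≤ Real.log a := by
      have : Real.log a = Real.log (1 + ε') + (Real.log T - Real.log (Real.log T)) := by
        rw [hadef, Real.log_div (by positivity) (ne_of_gt hlogT0),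
          Real.log_mul (by positivity) (ne_of_gt hT0)]
        ring
      have hl1e : 0 ≤ Real.log (1 + ε') := Real.log_nonneg (by linarith)
      linarith
    have hu : Real.log (Real.log T) + C ≤ ε' / (1 + ε') * Real.log T := by
      rw [div_le_iff₀ hlogT0] at h2
      linarith [h2]
    have hr0 : 0 ≤ Real.log T - Real.log (Real.log T) - C := by
      have hk : ε' / (1 + ε') ≤ 1 := by
        rw [div_le_one (by linarith)]; linarith
      nlinarith [hu, hlogT0]
    have hlx : Real.log a ≤ Real.log (n : ℝ) := Real.log_le_log ha0 hna
    have hchain : a * (Real.log T - Real.log (Real.log T) - C) ≤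
        (n : ℝ) * (Real.log (n : ℝ) - C) := by
      have h1' : a * (Real.log T - Real.log (Real.log T) - C) ≤ a * (Real.log (n:ℝ) - C) := by
        apply mul_le_mul_of_nonneg_left _ ha0.le
        linarith
      have h2' : a * (Real.log (n:ℝ) - C) ≤ (n : ℝ) * (Real.log (n:ℝ) - C) := by
        apply mul_le_mul_of_nonneg_right hna
        linarith
      linarith
    have hfinal : T ≤ a * (Real.log T - Real.log (Real.log T) - C) := by
      have halogT : a * Real.log T = (1 + ε') * T := by
        rw [hadef, div_mul_cancel₀ _ (ne_of_gt hlogT0)]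
      have step : a * (Real.log (Real.log T) + C) ≤ ε' * T := by
        calc a * (Real.log (Real.log T) + C) ≤ a * (ε' / (1 + ε') * Real.log T) := by
              apply mul_le_mul_of_nonneg_left hu ha0.le
          _ = ε' / (1 + ε') * (a * Real.log T) := by ring
          _ = ε' / (1 + ε') * ((1 + ε') * T) := by rw [halogT]
          _ = ε' * T := by field_simp
      nlinarith [step, halogT]
    linarith [hii, le_trans hfinal hchain]
  have hfin : Set.Finite {n : ℕ | 1 ≤ n ∧ lam < s n} :=
    (Set.finite_Iio K).subset hSub
  have hcard_up : Nat.card {n : ℕ | 1 ≤ n ∧ lam < s n} ≤ K := by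
    have h := Nat.card_mono (Set.finite_Iio K) hSub
    have hK : Nat.card (Set.Iio K) = K := by
      rw [← Finset.coe_range, Nat.card_coe_set_eq, Set.ncard_coe_finset, Finset.card_range]
    omega
  -- lower inclusion
  have hIccSub : Set.Icc N₁ M ⊆ {n : ℕ | 1 ≤ n ∧ lam < s n} := by
    intro n hn
    obtain ⟨hnl, hnr⟩ := hn
    have hn1 : 1 ≤ n := le_trans hN₁1 hnl
    refine ⟨hn1, hcrit1 lam hl0 n hnl ?_⟩
    have hx1 : (1 : ℝ) ≤ (n : ℝ) := by exact_mod_cast hn1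
    have hxb : (n : ℝ) ≤ b :=
      le_trans (by exact_mod_cast hnr : (n:ℝ) ≤ (M:ℝ)) (Nat.floor_le hb0.le)
    rcases le_or_gt (Real.log (n : ℝ) + C) 0 with hneg | hpos
    · have : (n : ℝ) * (Real.log (n:ℝ) + C) ≤ 0 :=
        mul_nonpos_of_nonneg_of_nonpos (by linarith) hneg
      linarith
    · have hlb : Real.log (n : ℝ) ≤ Real.log b := Real.log_le_log (by linarith) hxb
      have hlbT : Real.log b ≤ Real.log T := Real.log_le_log hb0 hbT
      have hblogT : b * Real.log T = (1 - ε') * T := by rw [hbdef, div_mul_cancel₀ _ (ne_of_gt hlogT0)]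
      have hCb : b * C < ε' * T := by
        have h1e : (1:ℝ) - ε' ≠ 0 := ne_of_gt (by linarith)
        have hC' : C < ε' / (1 - ε') * Real.log T := by
          rw [div_lt_iff₀ hlogT0] at h3
          linarith [h3]
        calc b * C < b * (ε' / (1 - ε') * Real.log T) :=
              mul_lt_mul_of_pos_left hC' hb0
          _ = ε' / (1 - ε') * (b * Real.log T) := by ring
          _ = ε' / (1 - ε') * ((1 - ε') * T) := by rw [hblogT]
          _ = ε' * T := by rw [← mul_assoc, div_mul_cancel₀ _ h1e]
      calc (n : ℝ) * (Real.log (n:ℝ) + C) ≤ b * (Real.log (n:ℝ) + C) := by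
            apply mul_le_mul_of_nonneg_right hxb (by linarith)
        _ ≤ b * (Real.log T + C) := by
            apply mul_le_mul_of_nonneg_left _ hb0.le
            linarith
        _ = b * Real.log T + b * C := by ring
        _ < (1 - ε') * T + ε' * T := by rw [hblogT]; linarith [hCb]
        _ = T := by ring
  have hMN : N₁ + 1 ≤ M := by
    rw [hMdef]
    apply Nat.le_floor
    push_cast
    linarith [hbN]
  have hcard_lo : M + 1 - N₁ ≤ Nat.card {n : ℕ | 1 ≤ n ∧ lam < s n} := by
    have h := Nat.card_mono hfin hIccSub
    have : Nat.card (Set.Icc N₁ M) = M + 1 - N₁ := by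
      rw [← Finset.coe_Icc, Nat.card_coe_set_eq, Set.ncard_coe_finset, Nat.card_Icc]
    omega
  -- real bounds on card
  set nc : ℝ := (Nat.card {n : ℕ | 1 ≤ n ∧ lam < s n} : ℝ) with hncdef
  have hnc_up : nc ≤ a + ((N₁ : ℝ) + 1) := by
    have h1' : nc ≤ (K : ℝ) := by rw [hncdef]; exact_mod_cast hcard_up
    have h2' : ((⌈a⌉₊ : ℕ) : ℝ) ≤ a + 1 := by
      have := Nat.ceil_lt_add_one ha0.le
      linarith
    have : (K : ℝ) = (N₁ : ℝ) + (⌈a⌉₊ : ℝ) := by push_cast [hKdef]; ring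
    linarith
  have hnc_lo : b - (N₁ : ℝ) ≤ nc := by
    have h1' : ((M + 1 - N₁ : ℕ) : ℝ) ≤ nc := by rw [hncdef]; exact_mod_cast hcard_lo
    have hcast : ((M + 1 - N₁ : ℕ) : ℝ) = (M : ℝ) + 1 - (N₁ : ℝ) := by
      have : N₁ ≤ M + 1 := by omega
      push_cast [Nat.cast_sub this]
      ring
    have hMb : b - 1 ≤ (M : ℝ) := by
      have := Nat.sub_one_lt_floor b
      rw [hMdef]; linarith
    rw [hcast] at h1'
    linarith
  -- conclude
  rw [Real.dist_eq, habs]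
  have halogT : a * Real.log T = (1 + ε') * T := by rw [hadef, div_mul_cancel₀ _ (ne_of_gt hlogT0)]
  have hblogT : b * Real.log T = (1 - ε') * T := by rw [hbdef, div_mul_cancel₀ _ (ne_of_gt hlogT0)]
  have hN1T : ((N₁:ℝ)+1) * Real.log T ≤ ε' * T := by
    have h5T := mul_le_mul_of_nonneg_right h5 hT0.le
    rwa [mul_assoc, div_mul_cancel₀ _ (ne_of_gt hT0)] at h5T
  have hup : nc * Real.log T / T ≤ 1 + 2 * ε' := by
    rw [div_le_iff₀ hT0]
    have hm : nc * Real.log T ≤ (a + ((N₁:ℝ)+1)) * Real.log T :=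
      mul_le_mul_of_nonneg_right hnc_up hlogT0.le
    have hexp : (a + ((N₁:ℝ)+1)) * Real.log T
        = a * Real.log T + ((N₁:ℝ)+1) * Real.log T := by ring
    linarith [hm, halogT, hN1T, hexp]
  have hlo : 1 - 2 * ε' ≤ nc * Real.log T / T := by
    rw [le_div_iff₀ hT0]
    have hm : (b - (N₁:ℝ)) * Real.log T ≤ nc * Real.log T :=
      mul_le_mul_of_nonneg_right hnc_lo hlogT0.le
    have hNT : (N₁:ℝ) * Real.log T ≤ ε' * T := by
      have : (N₁:ℝ) * Real.log T ≤ ((N₁:ℝ)+1) * Real.log T := by nlinarith [hlogT0.le]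
      linarith [hN1T]
    have hexp : (b - (N₁:ℝ)) * Real.log T
        = b * Real.log T - (N₁:ℝ) * Real.log T := by ring
    linarith [hm, hblogT, hNT, hexp]
  rw [abs_lt]
  constructor <;> nlinarith [hup, hlo, hε'ε]
end

section
/- Let (s_n) be a non-increasing sequence of positive reals such that e^{-n log n − αn} ≤ s_n ≤ e^{-n log n + αn} for some α > 0 and all sufficiently large n. Then the counting function N(λ) = #{n : s_n > λ} satisfies N(λ) · log N(λ) = |log λ|(1+o(1)) as λ → 0⁺, equivalently N(λ) = |log λ|/log|log λ| · (1+o(1)). -/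
open Filter
open scoped Topology

section Stmt13Aux
open Real

private lemma aux_loglog : Tendsto (fun x : ℝ => log (log x) / log x) atTop (𝓝 0) :=
  (Real.isLittleO_log_id_atTop.tendsto_div_nhds_zero).comp Real.tendsto_log_atTop

private lemma aux_logn : Tendsto (fun n : ℕ => Real.log n) atTop atTop :=
  Real.tendsto_log_atTop.comp tendsto_natCast_atTop_atTop

private lemma aux_loglogn : Tendsto (fun n : ℕ => log (log n) / log n) atTop (𝓝 0) :=
  aux_loglog.comp tendsto_natCast_atTop_atTop

-- L2
private lemma aux_L2 : Tendsto (fun n : ℕ => log ((n:ℝ)+1) / log n) atTop (𝓝 1) := by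
  have hup : Tendsto (fun n : ℕ => log 2 / log n + 1) atTop (𝓝 1) := by
    have := (tendsto_const_nhds (x := Real.log 2)).div_atTop aux_logn
    simpa using this.add (tendsto_const_nhds (x := (1:ℝ)))
  refine tendsto_of_tendsto_of_tendsto_of_le_of_le' tendsto_const_nhds hup ?_ ?_
  · filter_upwards [eventually_ge_atTop 2] with n hn
    have h2 : (2:ℝ) ≤ (n:ℝ) := by exact_mod_cast hn
    have hlog : 0 < Real.log n := Real.log_pos (by linarith)
    have : Real.log n ≤ Real.log ((n:ℝ)+1) := Real.log_le_log (by linarith) (by linarith)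
    rw [le_div_iff₀ hlog]; linarith
  · filter_upwards [eventually_ge_atTop 2] with n hn
    have h2 : (2:ℝ) ≤ (n:ℝ) := by exact_mod_cast hn
    have hlog : 0 < Real.log n := Real.log_pos (by linarith)
    have h1 : Real.log ((n:ℝ)+1) ≤ Real.log (2*n) := Real.log_le_log (by linarith) (by linarith)
    have h2' : Real.log (2*(n:ℝ)) = Real.log 2 + Real.log n := Real.log_mul (by norm_num) (by linarith)
    rw [div_le_iff₀ hlog]; rw [h2'] at h1
    have : (Real.log 2 / Real.log n + 1) * Real.log n = Real.log 2 + Real.log n := by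
      field_simp
    linarith [this ▸ h1]

-- L3
private lemma aux_L3 (α : ℝ) (hα0 : 0 < α) : Tendsto (fun n : ℕ => log (log ((n:ℝ)+1) + α) / log n) atTop (𝓝 0) := by
  have hup : Tendsto (fun n : ℕ => log 3 / log n + log (log n) / log n) atTop (𝓝 0) := by
    have h1 := (tendsto_const_nhds (x := Real.log 3)).div_atTop aux_logn
    simpa using h1.add aux_loglogn
  refine tendsto_of_tendsto_of_tendsto_of_le_of_le' tendsto_const_nhds hup ?_ ?_
  · filter_upwards [eventually_ge_atTop 3,
      (aux_logn.eventually_ge_atTop (α + 1)), (aux_logn.eventually_ge_atTop 1)] with n hn hα h1n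
    have h3 : (3:ℝ) ≤ (n:ℝ) := by exact_mod_cast hn
    have hlog : 0 < Real.log n := Real.log_pos (by linarith)
    have h1 : (1:ℝ) ≤ Real.log ((n:ℝ)+1) + α := by
      have : Real.log n ≤ Real.log ((n:ℝ)+1) := Real.log_le_log (by linarith) (by linarith)
      linarith
    have : 0 ≤ Real.log (Real.log ((n:ℝ)+1) + α) := Real.log_nonneg h1
    positivity
  · filter_upwards [eventually_ge_atTop 3,
      (aux_logn.eventually_ge_atTop (α + 1)), (aux_logn.eventually_ge_atTop 1)] with n hn hα h1n
    have h3 : (3:ℝ) ≤ (n:ℝ) := by exact_mod_cast hn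
    have hlog : 0 < Real.log n := Real.log_pos (by linarith)
    have hln1 : Real.log ((n:ℝ)+1) ≤ Real.log ((n:ℝ)^2) := Real.log_le_log (by linarith) (by nlinarith)
    have hα' : α ≤ Real.log ((n:ℝ)+1) := by
      have : Real.log n ≤ Real.log ((n:ℝ)+1) := Real.log_le_log (by linarith) (by linarith)
      linarith
    have hb : Real.log ((n:ℝ)+1) + α ≤ 3 * Real.log n := by
      rw [Real.log_pow] at hln1; push_cast at hln1
      linarith
    have hpos : (0:ℝ) < Real.log ((n:ℝ)+1) + α := by
      have : Real.log n ≤ Real.log ((n:ℝ)+1) := Real.log_le_log (by linarith) (by linarith)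
      linarith
    have h4 : Real.log (Real.log ((n:ℝ)+1) + α) ≤ Real.log (3 * Real.log n) :=
      Real.log_le_log hpos hb
    have h5 : Real.log (3 * Real.log n) = Real.log 3 + Real.log (Real.log n) :=
      Real.log_mul (by norm_num) (ne_of_gt hlog)
    rw [div_le_iff₀ hlog]
    have : (Real.log 3 / Real.log n + Real.log (Real.log n) / Real.log n) * Real.log n
        = Real.log 3 + Real.log (Real.log n) := by field_simp
    rw [this]; linarith

-- LA
private lemma aux_LA (α : ℝ) :
    Tendsto (fun n : ℕ => ((n:ℝ) * log n - α * n) / ((n:ℝ) * log n)) atTop (𝓝 1) := by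
  have h : Tendsto (fun n : ℕ => 1 - α / log n) atTop (𝓝 1) := by
    have := (tendsto_const_nhds (x := α)).div_atTop aux_logn
    simpa using (tendsto_const_nhds (x := (1:ℝ))).sub this
  refine h.congr' ?_
  filter_upwards [eventually_ge_atTop 2] with n hn
  have h2 : (2:ℝ) ≤ (n:ℝ) := by exact_mod_cast hn
  have hlog : 0 < Real.log n := Real.log_pos (by linarith)
  field_simp

-- LB
private lemma aux_LB (α : ℝ) :
    Tendsto (fun n : ℕ => (((n:ℝ)+1) * log ((n:ℝ)+1) + α * ((n:ℝ)+1)) / ((n:ℝ) * log n))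
      atTop (𝓝 1) := by
  have h1 : Tendsto (fun n : ℕ => ((n:ℝ)+1)/(n:ℝ)) atTop (𝓝 1) := by
    have := (tendsto_const_nhds (x := (1:ℝ))).div_atTop tendsto_natCast_atTop_atTop
    have h := (tendsto_const_nhds (x := (1:ℝ))).add this
    rw [add_zero] at h
    refine h.congr' ?_
    filter_upwards [eventually_ge_atTop 1] with n hn
    have : (0:ℝ) < n := by exact_mod_cast hn
    field_simp
  have h2 : Tendsto (fun n : ℕ => log ((n:ℝ)+1)/log n + α / log n) atTop (𝓝 1) := by
    have := (tendsto_const_nhds (x := α)).div_atTop aux_logn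
    simpa using aux_L2.add this
  have h := h1.mul h2
  rw [one_mul] at h
  refine h.congr' ?_
  filter_upwards [eventually_ge_atTop 2] with n hn
  have h2 : (2:ℝ) ≤ (n:ℝ) := by exact_mod_cast hn
  have hlog : 0 < Real.log n := Real.log_pos (by linarith)
  have hn0 : (n:ℝ) ≠ 0 := by linarith
  field_simp

-- LC
private lemma aux_LC (α : ℝ) (hα0 : 0 < α) :
    Tendsto (fun n : ℕ => log ((n:ℝ) * log n - α * n) / log n) atTop (𝓝 1) := by
  have ht : Tendsto (fun n : ℕ => 1 + log (log (n:ℝ) - α) / log n) atTop (𝓝 1) := by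
    have hz : Tendsto (fun n : ℕ => log (log (n:ℝ) - α) / log n) atTop (𝓝 0) := by
      refine tendsto_of_tendsto_of_tendsto_of_le_of_le' tendsto_const_nhds aux_loglogn ?_ ?_
      · filter_upwards [aux_logn.eventually_ge_atTop (α + 1), eventually_ge_atTop 2] with n h1 h2
        have h2' : (2:ℝ) ≤ (n:ℝ) := by exact_mod_cast h2
        have hlog : 0 < Real.log n := Real.log_pos (by linarith)
        have : 0 ≤ Real.log (Real.log (n:ℝ) - α) := Real.log_nonneg (by linarith)
        positivity
      · filter_upwards [aux_logn.eventually_ge_atTop (α + 1), eventually_ge_atTop 2] with n h1 h2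
        have h2' : (2:ℝ) ≤ (n:ℝ) := by exact_mod_cast h2
        have hlog : 0 < Real.log n := Real.log_pos (by linarith)
        have hle : Real.log (Real.log (n:ℝ) - α) ≤ Real.log (Real.log n) :=
          Real.log_le_log (by linarith) (by linarith)
        gcongr
    simpa using (tendsto_const_nhds (x := (1:ℝ))).add hz
  refine ht.congr' ?_
  filter_upwards [aux_logn.eventually_ge_atTop (α + 1), eventually_ge_atTop 2] with n h1 h2
  have h2' : (2:ℝ) ≤ (n:ℝ) := by exact_mod_cast h2
  have hlog : 0 < Real.log n := Real.log_pos (by linarith)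
  have hfac : (n:ℝ) * log n - α * n = (n:ℝ) * (log n - α) := by ring
  rw [hfac, Real.log_mul (by linarith) (by linarith)]
  field_simp

-- LD
private lemma aux_LD (α : ℝ) (hα0 : 0 < α) :
    Tendsto (fun n : ℕ => log (((n:ℝ)+1) * log ((n:ℝ)+1) + α * ((n:ℝ)+1)) / log n)
      atTop (𝓝 1) := by
  have ht := aux_L2.add (aux_L3 α hα0)
  rw [add_zero] at ht
  refine ht.congr' ?_
  filter_upwards [aux_logn.eventually_ge_atTop 1, eventually_ge_atTop 2] with n h1 h2
  have h2' : (2:ℝ) ≤ (n:ℝ) := by exact_mod_cast h2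
  have hlog : 0 < Real.log n := Real.log_pos (by linarith)
  have hlog1 : Real.log ((n:ℝ)+1) > 0 := Real.log_pos (by linarith)
  have hfac : ((n:ℝ)+1) * log ((n:ℝ)+1) + α * ((n:ℝ)+1) = ((n:ℝ)+1) * (log ((n:ℝ)+1) + α) := by ring
  rw [hfac, Real.log_mul (by linarith) (by linarith)]
  field_simp

end Stmt13Aux

/-- Inversion of super-exponential decay: if `(s_n)_{n≥1}` is non-increasing, positive,
with `e^{-n log n - αn} ≤ s_n ≤ e^{-n log n + αn}` for large `n`, then the counting
function `N(λ) = #{n ≥ 1 : s_n > λ}` satisfies `N(λ) log N(λ) = |log λ|(1+o(1))`,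
equivalently `N(λ) = |log λ|/log|log λ| · (1+o(1))`, as `λ → 0⁺`. -/
theorem stmt13 (s : ℕ → ℝ) (hpos : ∀ n : ℕ, 1 ≤ n → 0 < s n)
    (hmono : ∀ m n : ℕ, 1 ≤ m → m ≤ n → s n ≤ s m)
    (α : ℝ) (hα : 0 < α)
    (hbound : ∃ N : ℕ, ∀ n : ℕ, N ≤ n → 1 ≤ n →
      Real.exp (-(n : ℝ) * Real.log n - α * n) ≤ s n ∧
      s n ≤ Real.exp (-(n : ℝ) * Real.log n + α * n)) :
    Tendsto
      (fun lam : ℝ =>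
        (Nat.card {n : ℕ | 1 ≤ n ∧ lam < s n} : ℝ)
          * Real.log (Nat.card {n : ℕ | 1 ≤ n ∧ lam < s n}) / |Real.log lam|)
      (𝓝[>] (0 : ℝ)) (𝓝 1) ∧
    Tendsto
      (fun lam : ℝ =>
        (Nat.card {n : ℕ | 1 ≤ n ∧ lam < s n} : ℝ)
          * Real.log |Real.log lam| / |Real.log lam|)
      (𝓝[>] (0 : ℝ)) (𝓝 1) := by
  classical
  obtain ⟨N₀, hN₀⟩ := hbound
  set S : ℝ → Set ℕ := fun lam => {n : ℕ | 1 ≤ n ∧ lam < s n} with hSdef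
  set k : ℝ → ℕ := fun lam => sSup (S lam) with hkdef
  have hs1 : 0 < s 1 := hpos 1 le_rfl
  -- upper bound tends to 0
  have hup0 : Tendsto (fun n : ℕ => Real.exp (-(n:ℝ) * Real.log n + α * n)) atTop (𝓝 0) := by
    apply Real.tendsto_exp_atBot.comp
    have h1 : Tendsto (fun n : ℕ => (n:ℝ) * (Real.log n - α)) atTop atTop :=
      tendsto_natCast_atTop_atTop.atTop_mul_atTop₀
        (tendsto_atTop_add_const_right _ (-α) aux_logn)
    have h2 : Tendsto (fun n : ℕ => -((n:ℝ) * (Real.log n - α))) atTop atBot :=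
      tendsto_neg_atBot_iff.mpr h1
    refine h2.congr (fun n => by ring)
  -- bounded above
  have hBdd : ∀ lam : ℝ, 0 < lam → BddAbove (S lam) := by
    intro lam hlam
    have hev : ∀ᶠ n : ℕ in atTop, Real.exp (-(n:ℝ)*Real.log n + α*n) < lam :=
      hup0.eventually_lt_const hlam
    obtain ⟨M, hM⟩ := (hev.and (eventually_ge_atTop (max N₀ 1))).exists_forall_of_atTop
    refine ⟨M, fun n hn => ?_⟩
    by_contra hc
    push_neg at hc
    have h := hM n hc.le
    have h1n : 1 ≤ n := hn.1
    have hN : N₀ ≤ n := le_trans (le_max_left _ _) h.2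
    have := (hN₀ n hN h1n).2
    exact absurd hn.2 (not_lt.mpr (le_of_lt (lt_of_le_of_lt this h.1)))
  have hSne : ∀ lam : ℝ, 0 < lam → lam < s 1 → (S lam).Nonempty :=
    fun lam h h1 => ⟨1, le_rfl, h1⟩
  have hkmem : ∀ lam : ℝ, 0 < lam → lam < s 1 → k lam ∈ S lam :=
    fun lam h0 h1 => Nat.sSup_mem (hSne lam h0 h1) (hBdd lam h0)
  have hSIcc : ∀ lam : ℝ, 0 < lam → lam < s 1 → S lam = Set.Icc 1 (k lam) := by
    intro lam h0 h1
    ext n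
    constructor
    · intro hn
      exact ⟨hn.1, le_csSup (hBdd lam h0) hn⟩
    · rintro ⟨h1n, hnk⟩
      have hks := hkmem lam h0 h1
      exact ⟨h1n, lt_of_lt_of_le hks.2 (hmono n (k lam) h1n hnk)⟩
  have hcard : ∀ lam : ℝ, 0 < lam → lam < s 1 → Nat.card (S lam) = k lam := by
    intro lam h0 h1
    rw [hSIcc lam h0 h1, Nat.card_coe_set_eq, Set.ncard_eq_toFinset_card',
      Set.toFinset_Icc, Nat.card_Icc]
    omega
  have hk_top : Tendsto k (𝓝[>](0:ℝ)) atTop := by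
    rw [tendsto_atTop]
    intro b
    have hb1 : 0 < s (max b 1) := hpos _ (le_max_right _ _)
    filter_upwards [Ioo_mem_nhdsGT_of_mem (Set.left_mem_Ico.mpr hb1)] with lam hlam
    have hmem : max b 1 ∈ S lam := ⟨le_max_right _ _, hlam.2⟩
    exact le_trans (le_max_left b 1) (le_csSup (hBdd lam hlam.1) hmem)
  have hklog_top : Tendsto (fun lam => Real.log (k lam)) (𝓝[>](0:ℝ)) atTop :=
    aux_logn.comp hk_top
  -- key eventual bounds
  have hkey : ∀ᶠ lam in 𝓝[>](0:ℝ),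
      0 < lam ∧ lam < s 1 ∧ lam < 1 ∧ 2 ≤ k lam ∧ α + 1 ≤ Real.log (k lam) ∧
      (k lam : ℝ) * Real.log (k lam) - α * (k lam) < -Real.log lam ∧
      -Real.log lam ≤ ((k lam : ℝ)+1) * Real.log ((k lam:ℝ)+1) + α * ((k lam:ℝ)+1) := by
    have h1 : ∀ᶠ lam in 𝓝[>](0:ℝ), max N₀ 2 ≤ k lam := hk_top.eventually_ge_atTop _
    have h1' : ∀ᶠ lam in 𝓝[>](0:ℝ), α + 1 ≤ Real.log (k lam) :=
      hklog_top.eventually_ge_atTop _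
    have hmin : 0 < min (s 1) 1 := lt_min hs1 one_pos
    have h2 : Set.Ioo (0:ℝ) (min (s 1) 1) ∈ 𝓝[>](0:ℝ) :=
      Ioo_mem_nhdsGT_of_mem (Set.left_mem_Ico.mpr hmin)
    filter_upwards [h1, h1', h2] with lam hk2 hkα hlam
    obtain ⟨hl0, hlu⟩ := hlam
    have hls1 : lam < s 1 := lt_of_lt_of_le hlu (min_le_left _ _)
    have hl1 : lam < 1 := lt_of_lt_of_le hlu (min_le_right _ _)
    have hnS := hkmem lam hl0 hls1
    have h1n : 1 ≤ k lam := hnS.1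
    have hN₀n : N₀ ≤ k lam := le_trans (le_max_left _ _) hk2
    have h2n : 2 ≤ k lam := le_trans (le_max_right _ _) hk2
    refine ⟨hl0, hls1, hl1, h2n, hkα, ?_, ?_⟩
    · have hub := (hN₀ (k lam) hN₀n h1n).2
      have hlt : lam < Real.exp (-(k lam:ℝ)*Real.log (k lam) + α*(k lam)) :=
        lt_of_lt_of_le hnS.2 hub
      have hll := Real.log_lt_log hl0 hlt
      rw [Real.log_exp] at hll
      linarith
    · have hn1 : k lam + 1 ∉ S lam := fun h =>
        Nat.lt_irrefl (k lam) (lt_of_lt_of_le (Nat.lt_succ_self _) (le_csSup (hBdd lam hl0) h))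
      have hsle : s (k lam + 1) ≤ lam := by
        by_contra h
        push_neg at h
        exact hn1 ⟨by omega, h⟩
      have hlb := (hN₀ (k lam + 1) (by omega) (by omega)).1
      have h5 : Real.exp (-((k lam:ℝ)+1)*Real.log ((k lam:ℝ)+1) - α*((k lam:ℝ)+1)) ≤ lam := by
        refine le_trans (le_of_eq ?_) (le_trans hlb hsle)
        push_cast
        ring_nf
      have hll := Real.log_le_log (Real.exp_pos _) h5
      rw [Real.log_exp] at hll
      linarith
  -- squeeze: G / (k log k) → 1, where G = -log lam
  have hG : Tendsto (fun lam => (-Real.log lam) / ((k lam:ℝ) * Real.log (k lam)))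
      (𝓝[>](0:ℝ)) (𝓝 1) := by
    refine tendsto_of_tendsto_of_tendsto_of_le_of_le' ((aux_LA α).comp hk_top)
      ((aux_LB α).comp hk_top) ?_ ?_
    · filter_upwards [hkey] with lam ⟨h0, hls1, hl1, hk2, hkα, hA, hB⟩
      simp only [Function.comp_apply]
      have hk2' : (2:ℝ) ≤ (k lam : ℝ) := by exact_mod_cast hk2
      have hlogk : 0 < Real.log (k lam) := Real.log_pos (by linarith)
      gcongr
    · filter_upwards [hkey] with lam ⟨h0, hls1, hl1, hk2, hkα, hA, hB⟩
      simp only [Function.comp_apply]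
      have hk2' : (2:ℝ) ≤ (k lam : ℝ) := by exact_mod_cast hk2
      have hlogk : 0 < Real.log (k lam) := Real.log_pos (by linarith)
      gcongr
  have hGinv : Tendsto (fun lam => ((k lam:ℝ) * Real.log (k lam)) / (-Real.log lam))
      (𝓝[>](0:ℝ)) (𝓝 1) := by
    have := hG.inv₀ one_ne_zero
    simpa [inv_div] using this
  -- log G / log k → 1
  have hlogG : Tendsto (fun lam => Real.log (-Real.log lam) / Real.log (k lam))
      (𝓝[>](0:ℝ)) (𝓝 1) := by
    refine tendsto_of_tendsto_of_tendsto_of_le_of_le' ((aux_LC α hα).comp hk_top)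
      ((aux_LD α hα).comp hk_top) ?_ ?_
    · filter_upwards [hkey] with lam ⟨h0, hls1, hl1, hk2, hkα, hA, hB⟩
      simp only [Function.comp_apply]
      have hk2' : (2:ℝ) ≤ (k lam : ℝ) := by exact_mod_cast hk2
      have hlogk : 0 < Real.log (k lam) := Real.log_pos (by linarith)
      have hlowpos : 0 < (k lam:ℝ) * Real.log (k lam) - α * (k lam) := by nlinarith
      have := Real.log_le_log hlowpos hA.le
      gcongr
    · filter_upwards [hkey] with lam ⟨h0, hls1, hl1, hk2, hkα, hA, hB⟩
      simp only [Function.comp_apply]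
      have hk2' : (2:ℝ) ≤ (k lam : ℝ) := by exact_mod_cast hk2
      have hlogk : 0 < Real.log (k lam) := Real.log_pos (by linarith)
      have hlowpos : 0 < (k lam:ℝ) * Real.log (k lam) - α * (k lam) := by nlinarith
      have hGpos : 0 < -Real.log lam := lt_trans hlowpos hA
      have := Real.log_le_log hGpos hB
      gcongr
  constructor
  · refine hGinv.congr' ?_
    filter_upwards [hkey] with lam ⟨h0, hls1, hl1, hk2, hkα, hA, hB⟩
    have hcardeq := hcard lam h0 hls1
    have hlogneg : Real.log lam < 0 := Real.log_neg h0 hl1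
    rw [abs_of_neg hlogneg, hcardeq]
  · have h2nd := hGinv.mul hlogG
    rw [mul_one] at h2nd
    refine h2nd.congr' ?_
    filter_upwards [hkey] with lam ⟨h0, hls1, hl1, hk2, hkα, hA, hB⟩
    have hcardeq := hcard lam h0 hls1
    have hlogneg : Real.log lam < 0 := Real.log_neg h0 hl1
    have hk2' : (2:ℝ) ≤ (k lam : ℝ) := by exact_mod_cast hk2
    have hlogk : 0 < Real.log (k lam) := Real.log_pos (by linarith)
    have hlowpos : 0 < (k lam:ℝ) * Real.log (k lam) - α * (k lam) := by nlinarith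
    have hGpos : 0 < -Real.log lam := lt_trans hlowpos hA
    rw [abs_of_neg hlogneg, hcardeq]
    field_simp [hlogk.ne', hlogneg.ne]
end
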